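/- arXiv:2204.07665 — 4 statements merged into one kernel-verified Lean document; each statement's English description precedes it below -/
import Mathlib

section
/- Let p ≥ 2 and let q_0,...,q_p be the Lagrange basis polynomials of degree p at the equally spaced nodes ξ_i = i/p in [0,1]. Fix 0 < α̂ < 1 and define ψ_0(x) = x for x ∈ [0, α̂) and ψ_0(x) = 0 for x ∈ [α̂, 1], and ψ_1(x) = 0 for x ∈ [0, α̂) and ψ_1(x) = x - 1 for x ∈ [α̂, 1]. Then for every bubble function q_i with 1 ≤ i ≤ p-1, there exist real coefficients s_{l,0}, s_{l,1} (0 ≤ l ≤ p) such that q_i(x) = Σ_{l=0}^{p} s_{l,0} ψ_0(x) q_l(x) + Σ_{l=0}^{p} s_{l,1} ψ_1(x) q_l(x) for all x ∈ [0,1]. -/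
/-- The Lagrange basis polynomial of degree `p` at the equally spaced nodes
`ξ i = i / p` in `[0,1]`, as a function `ℝ → ℝ`. -/
noncomputable def lagrangeBasis (p : ℕ) (i : Fin (p+1)) : ℝ → ℝ :=
  fun x => ∏ j ∈ Finset.univ.erase i, (x - (j : ℕ)/(p : ℝ)) / ((i : ℕ)/(p : ℝ) - (j : ℕ)/(p : ℝ))

/-- One-sided enrichment function `ψ₀` on `[0,1]` (slope 1): `x` on `[0, α̂)`, `0` on `[α̂, 1]`. -/
noncomputable def psi0 (αhat : ℝ) : ℝ → ℝ := fun x => if x < αhat then x else 0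

/-- One-sided enrichment function `ψ₁` on `[0,1]` (slope 1): `0` on `[0, α̂)`, `x - 1` on `[α̂, 1]`. -/
noncomputable def psi1 (αhat : ℝ) : ℝ → ℝ := fun x => if x < αhat then 0 else x - 1

lemma lagrangeBasis_eq_eval (p : ℕ) (l : Fin (p+1)) (x : ℝ) :
    lagrangeBasis p l x =
      (Lagrange.basis Finset.univ (fun j : Fin (p+1) => (j : ℕ)/(p : ℝ)) l).eval x := by
  unfold lagrangeBasis Lagrange.basis
  rw [Polynomial.eval_prod]
  refine Finset.prod_congr rfl fun j hj => ?_
  simp [Lagrange.basisDivisor, div_eq_mul_inv, mul_comm]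

theorem stmt_6 (p : ℕ) (hp : 2 ≤ p) (αhat : ℝ) (hα : 0 < αhat) (hα1 : αhat < 1)
    (i : Fin (p+1)) (hi1 : 1 ≤ (i : ℕ)) (hi2 : (i : ℕ) ≤ p - 1) :
    ∃ s : Fin (p+1) → Fin 2 → ℝ, ∀ x ∈ Set.Icc (0:ℝ) 1,
      lagrangeBasis p i x =
        (∑ l : Fin (p+1), s l 0 * psi0 αhat x * lagrangeBasis p l x) +
        (∑ l : Fin (p+1), s l 1 * psi1 αhat x * lagrangeBasis p l x) := by
  have hp0 : (p : ℝ) ≠ 0 := by positivity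
  set v : Fin (p+1) → ℝ := fun j => (j : ℕ)/(p : ℝ) with hv
  have hvs : Set.InjOn v ↑(Finset.univ : Finset (Fin (p+1))) := by
    intro a _ b _ hab
    have : ((a : ℕ) : ℝ) = ((b : ℕ) : ℝ) := by
      rw [hv] at hab; simp only at hab; rw [div_left_inj' hp0] at hab; exact_mod_cast hab
    exact Fin.ext (Nat.cast_injective this)
  set Q : Polynomial ℝ := Lagrange.basis Finset.univ v i with hQ
  have hQne : Q ≠ 0 := Lagrange.basis_ne_zero hvs (Finset.mem_univ i)
  have hQdeg : Q.natDegree = p := by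
    rw [hQ, Lagrange.natDegree_basis hvs (Finset.mem_univ i)]
    simp
  -- roots at 0 and 1
  have hi0 : i ≠ (0 : Fin (p+1)) := by
    intro h; rw [h] at hi1; simp at hi1
  have hilast : i ≠ Fin.last p := by
    intro h
    have : (i : ℕ) = p := by rw [h]; rfl
    omega
  have hv0 : v 0 = 0 := by simp [hv]
  have hv1 : v (Fin.last p) = 1 := by
    simp [hv, Fin.last]
    omega
  have hroot0 : Q.eval 0 = 0 := by
    have := Lagrange.eval_basis_of_ne (s := Finset.univ) (v := v) hi0 (Finset.mem_univ (0 : Fin (p+1)))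
    rwa [hv0] at this
  have hroot1 : Q.eval 1 = 0 := by
    have := Lagrange.eval_basis_of_ne (s := Finset.univ) (v := v) hilast (Finset.mem_univ (Fin.last p))
    rwa [hv1] at this
  obtain ⟨R, hR⟩ := (Polynomial.dvd_iff_isRoot.mpr hroot0 : (Polynomial.X - Polynomial.C 0) ∣ Q)
  obtain ⟨T, hT⟩ := (Polynomial.dvd_iff_isRoot.mpr hroot1 : (Polynomial.X - Polynomial.C 1) ∣ Q)
  have hRne : R ≠ 0 := by rintro rfl; simp at hR; exact hQne hR
  have hTne : T ≠ 0 := by rintro rfl; simp at hT; exact hQne hT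
  have hXC0 : (Polynomial.X - Polynomial.C (0:ℝ)) ≠ 0 := Polynomial.X_sub_C_ne_zero 0
  have hXC1 : (Polynomial.X - Polynomial.C (1:ℝ)) ≠ 0 := Polynomial.X_sub_C_ne_zero 1
  have hRdeg : R.natDegree = p - 1 := by
    have := hQdeg
    rw [hR, Polynomial.natDegree_mul hXC0 hRne, Polynomial.natDegree_X_sub_C] at this
    omega
  have hTdeg : T.natDegree = p - 1 := by
    have := hQdeg
    rw [hT, Polynomial.natDegree_mul hXC1 hTne, Polynomial.natDegree_X_sub_C] at this
    omega
  have hcard : (Finset.univ : Finset (Fin (p+1))).card = p + 1 := by simp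
  have hRdeglt : R.degree < ((Finset.univ : Finset (Fin (p+1))).card : WithBot ℕ) := by
    rw [hcard]
    calc R.degree ≤ (R.natDegree : WithBot ℕ) := Polynomial.degree_le_natDegree
      _ < ((p+1 : ℕ) : WithBot ℕ) := by exact_mod_cast (by omega : R.natDegree < p + 1)
  have hTdeglt : T.degree < ((Finset.univ : Finset (Fin (p+1))).card : WithBot ℕ) := by
    rw [hcard]
    calc T.degree ≤ (T.natDegree : WithBot ℕ) := Polynomial.degree_le_natDegree
      _ < ((p+1 : ℕ) : WithBot ℕ) := by exact_mod_cast (by omega : T.natDegree < p + 1)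
  have hRint := (Lagrange.eq_interpolate hvs hRdeglt).symm
  have hTint := (Lagrange.eq_interpolate hvs hTdeglt).symm
  refine ⟨fun l k => if k = 0 then R.eval (v l) else T.eval (v l), ?_⟩
  intro x hx
  have hQx : lagrangeBasis p i x = Q.eval x := lagrangeBasis_eq_eval p i x
  have hRx : R.eval x = ∑ l : Fin (p+1), R.eval (v l) * lagrangeBasis p l x := by
    conv_lhs => rw [← hRint]
    rw [Lagrange.interpolate_apply, Polynomial.eval_finset_sum]
    exact Finset.sum_congr rfl fun l _ => by
      rw [Polynomial.eval_mul, Polynomial.eval_C, lagrangeBasis_eq_eval]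
  have hTx : T.eval x = ∑ l : Fin (p+1), T.eval (v l) * lagrangeBasis p l x := by
    conv_lhs => rw [← hTint]
    rw [Lagrange.interpolate_apply, Polynomial.eval_finset_sum]
    exact Finset.sum_congr rfl fun l _ => by
      rw [Polynomial.eval_mul, Polynomial.eval_C, lagrangeBasis_eq_eval]
  by_cases hcase : x < αhat
  · have hpsi0 : psi0 αhat x = x := by simp [psi0, hcase]
    have hpsi1 : psi1 αhat x = 0 := by simp [psi1, hcase]
    rw [hQx, hR]
    simp only [hpsi0, hpsi1, mul_zero, zero_mul, Finset.sum_const_zero, add_zero, if_pos rfl]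
    rw [Polynomial.eval_mul]
    simp only [Polynomial.eval_sub, Polynomial.eval_X, Polynomial.eval_C, sub_zero]
    rw [hRx, Finset.mul_sum]
    refine Finset.sum_congr rfl fun l _ => ?_
    simp only [ite_true, ite_false]
    ring
  · have hpsi0 : psi0 αhat x = 0 := by simp [psi0, hcase]
    have hpsi1 : psi1 αhat x = x - 1 := by simp [psi1, hcase]
    rw [hQx, hT]
    have h10 : (1 : Fin 2) ≠ 0 := by decide
    simp only [hpsi0, hpsi1, mul_zero, zero_mul, Finset.sum_const_zero, zero_add, if_neg h10]
    rw [Polynomial.eval_mul]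
    simp only [Polynomial.eval_sub, Polynomial.eval_X, Polynomial.eval_C]
    rw [hTx, Finset.mul_sum]
    exact Finset.sum_congr rfl fun l _ => by ring
end

section
/- Let p ≥ 1, 0 < α̂ < 1, and let q_0,...,q_p be the Lagrange basis polynomials at equally spaced nodes ξ_i = i/p on [0,1]. Define ψ_0(x) = x·𝟙_{[0,α̂)}(x) and ψ_1(x) = (x-1)·𝟙_{[α̂,1]}(x). Then for any two polynomials u_1, u_2 of degree ≤ p, the piecewise polynomial u(x) = u_1(x) for x ∈ [0, α̂) and u(x) = u_2(x) for x ∈ [α̂, 1] can be written as u = ζ_0 q_0 + ζ_p q_p + Σ_{j=0}^{p} ζ_{j+p+1} q_j ψ_0 + Σ_{j=0}^{p} ζ_{j+2p+2} q_j ψ_1 for unique real coefficients ζ_0, ζ_p, ζ_{p+1},...,ζ_{3p+2}. -/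
open Polynomial Finset

theorem stmt_7 (p : ℕ) (hp : 1 ≤ p) (αhat : ℝ) (hα : 0 < αhat) (hα1 : αhat < 1)
    (u₁ u₂ : Polynomial ℝ) (hu₁ : u₁.degree ≤ p) (hu₂ : u₂.degree ≤ p) :
    ∃! ζ : ℝ × ℝ × (Fin (p+1) → ℝ) × (Fin (p+1) → ℝ),
      ∀ x ∈ Set.Icc (0:ℝ) 1,
        (if x < αhat then u₁.eval x else u₂.eval x) =
          ζ.1 * lagrangeBasis p 0 x + ζ.2.1 * lagrangeBasis p (Fin.last p) x +
          (∑ j : Fin (p+1), ζ.2.2.1 j * lagrangeBasis p j x * psi0 αhat x) +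
          (∑ j : Fin (p+1), ζ.2.2.2 j * lagrangeBasis p j x * psi1 αhat x) := by
  classical
  have hpR : (p:ℝ) ≠ 0 := Nat.cast_ne_zero.mpr (by omega)
  set v : Fin (p+1) → ℝ := fun i => ((i:ℕ):ℝ)/(p:ℝ) with hv_def
  have hv : Set.InjOn v (Finset.univ : Finset (Fin (p+1))) := by
    intro i _ j _ hij
    have : ((i:ℕ):ℝ) = ((j:ℕ):ℝ) := by
      have hij' : ((i:ℕ):ℝ)/(p:ℝ) = ((j:ℕ):ℝ)/(p:ℝ) := hij
      exact (div_left_inj' hpR).mp hij'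
    exact Fin.ext (by exact_mod_cast this)
  set L : Fin (p+1) → ℝ[X] := fun i => Lagrange.basis Finset.univ v i with hL_def
  have lag_eval : ∀ (i : Fin (p+1)) (x : ℝ), lagrangeBasis p i x = (L i).eval x := by
    intro i x
    unfold lagrangeBasis
    show _ = eval x (∏ j ∈ Finset.univ.erase i, Lagrange.basisDivisor (v i) (v j))
    rw [eval_prod]
    refine Finset.prod_congr rfl fun j hj => ?_
    simp [Lagrange.basisDivisor, hv_def, div_eq_mul_inv, mul_comm]
  have hcard : (Finset.univ : Finset (Fin (p+1))).card = p + 1 := by simp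
  have hv0 : v 0 = 0 := by simp [hv_def]
  have hvlast : v (Fin.last p) = 1 := by
    simp only [hv_def, Fin.val_last]
    exact div_self hpR
  have h0last : (0 : Fin (p+1)) ≠ Fin.last p := by
    intro h
    have := congrArg Fin.val h
    simp [Fin.val_last] at this
    omega
  have e00 : (L 0).eval 0 = 1 := by
    have := Lagrange.eval_basis_self hv (mem_univ (0 : Fin (p+1)))
    rwa [hv0] at this
  have e0l : (L (Fin.last p)).eval 0 = 0 := by
    have := Lagrange.eval_basis_of_ne (v := v) (Ne.symm h0last) (mem_univ (0 : Fin (p+1)))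
    rwa [hv0] at this
  have el0 : (L 0).eval 1 = 0 := by
    have := Lagrange.eval_basis_of_ne (v := v) h0last (mem_univ (Fin.last p))
    rwa [hvlast] at this
  have ell : (L (Fin.last p)).eval 1 = 1 := by
    have := Lagrange.eval_basis_self hv (mem_univ (Fin.last p))
    rwa [hvlast] at this
  -- the two polynomials associated to a coefficient tuple
  set P1 : ℝ × ℝ × (Fin (p+1) → ℝ) × (Fin (p+1) → ℝ) → ℝ[X] :=
    fun c => C c.1 * L 0 + C c.2.1 * L (Fin.last p) +
      X * Lagrange.interpolate Finset.univ v c.2.2.1 with hP1_def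
  set P2 : ℝ × ℝ × (Fin (p+1) → ℝ) × (Fin (p+1) → ℝ) → ℝ[X] :=
    fun c => C c.1 * L 0 + C c.2.1 * L (Fin.last p) +
      (X - C 1) * Lagrange.interpolate Finset.univ v c.2.2.2 with hP2_def
  have interp_eval : ∀ (a : Fin (p+1) → ℝ) (x : ℝ),
      (Lagrange.interpolate Finset.univ v a).eval x = ∑ j : Fin (p+1), a j * lagrangeBasis p j x := by
    intro a x
    rw [Lagrange.interpolate_apply, eval_finset_sum]
    exact Finset.sum_congr rfl fun j _ => by rw [lag_eval, eval_mul, eval_C]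
  -- the key reformulation
  have key : ∀ c : ℝ × ℝ × (Fin (p+1) → ℝ) × (Fin (p+1) → ℝ),
      (∀ x ∈ Set.Icc (0:ℝ) 1,
        (if x < αhat then u₁.eval x else u₂.eval x) =
          c.1 * lagrangeBasis p 0 x + c.2.1 * lagrangeBasis p (Fin.last p) x +
          (∑ j : Fin (p+1), c.2.2.1 j * lagrangeBasis p j x * psi0 αhat x) +
          (∑ j : Fin (p+1), c.2.2.2 j * lagrangeBasis p j x * psi1 αhat x))
      ↔ (P1 c = u₁ ∧ P2 c = u₂) := by
    intro c
    have eval1 : ∀ x : ℝ, x < αhat →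
        c.1 * lagrangeBasis p 0 x + c.2.1 * lagrangeBasis p (Fin.last p) x +
          (∑ j : Fin (p+1), c.2.2.1 j * lagrangeBasis p j x * psi0 αhat x) +
          (∑ j : Fin (p+1), c.2.2.2 j * lagrangeBasis p j x * psi1 αhat x)
        = (P1 c).eval x := by
      intro x hx
      simp only [psi0, psi1, if_pos hx, mul_zero, Finset.sum_const_zero, add_zero]
      simp only [hP1_def, eval_add, eval_mul, eval_C, eval_X, interp_eval, lag_eval,
        Finset.mul_sum]
      congr 1
      exact Finset.sum_congr rfl fun j _ => by ring
    have eval2 : ∀ x : ℝ, ¬ x < αhat →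
        c.1 * lagrangeBasis p 0 x + c.2.1 * lagrangeBasis p (Fin.last p) x +
          (∑ j : Fin (p+1), c.2.2.1 j * lagrangeBasis p j x * psi0 αhat x) +
          (∑ j : Fin (p+1), c.2.2.2 j * lagrangeBasis p j x * psi1 αhat x)
        = (P2 c).eval x := by
      intro x hx
      simp only [psi0, psi1, if_neg hx, mul_zero, Finset.sum_const_zero, add_zero]
      simp only [hP2_def, eval_add, eval_sub, eval_mul, eval_C, eval_X, interp_eval, lag_eval,
        Finset.mul_sum]
      congr 1
      exact Finset.sum_congr rfl fun j _ => by ring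
    constructor
    · intro h
      constructor
      · refine Polynomial.eq_of_infinite_eval_eq _ _ (Set.Infinite.mono ?_ (Set.Ioo_infinite hα))
        intro x hx
        obtain ⟨hx0, hxα⟩ := hx
        have hxI : x ∈ Set.Icc (0:ℝ) 1 := ⟨le_of_lt hx0, le_of_lt (lt_trans hxα hα1)⟩
        have := h x hxI
        rw [if_pos hxα, eval1 x hxα] at this
        exact this.symm
      · refine Polynomial.eq_of_infinite_eval_eq _ _ (Set.Infinite.mono ?_ (Set.Ioo_infinite hα1))
        intro x hx
        obtain ⟨hxα, hx1⟩ := hx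
        have hxI : x ∈ Set.Icc (0:ℝ) 1 := ⟨le_of_lt (lt_trans hα hxα), le_of_lt hx1⟩
        have hnx : ¬ x < αhat := not_lt.mpr (le_of_lt hxα)
        have := h x hxI
        rw [if_neg hnx, eval2 x hnx] at this
        exact this.symm
    · rintro ⟨h1, h2⟩ x _
      by_cases hxα : x < αhat
      · rw [if_pos hxα, eval1 x hxα, h1]
      · rw [if_neg hxα, eval2 x hxα, h2]
  -- degree bounds on the basis polynomials
  have hLdeg : ∀ i, (L i).degree ≤ (p : WithBot ℕ) := by
    intro i
    rw [hL_def]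
    rw [show (fun i => Lagrange.basis Finset.univ v i) i = Lagrange.basis Finset.univ v i from rfl,
      Lagrange.degree_basis hv (mem_univ i), hcard]
    simp
  have hCL : ∀ (a : ℝ) i, (C a * L i).degree ≤ (p : WithBot ℕ) := by
    intro a i
    refine le_trans (degree_mul_le _ _) ?_
    calc (C a).degree + (L i).degree ≤ 0 + (p : WithBot ℕ) := add_le_add degree_C_le (hLdeg i)
    _ = (p : WithBot ℕ) := zero_add _
  -- existence
  set z0 : ℝ := u₁.eval 0 with hz0
  set zp : ℝ := u₂.eval 1 with hzp
  set w₁ : ℝ[X] := u₁ - C z0 * L 0 - C zp * L (Fin.last p) with hw1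
  set w₂ : ℝ[X] := u₂ - C z0 * L 0 - C zp * L (Fin.last p) with hw2
  have hw1deg : w₁.degree ≤ (p : WithBot ℕ) :=
    le_trans (degree_sub_le _ _)
      (max_le (le_trans (degree_sub_le _ _) (max_le hu₁ (hCL _ _))) (hCL _ _))
  have hw2deg : w₂.degree ≤ (p : WithBot ℕ) :=
    le_trans (degree_sub_le _ _)
      (max_le (le_trans (degree_sub_le _ _) (max_le hu₂ (hCL _ _))) (hCL _ _))
  obtain ⟨A, hA⟩ : X ∣ w₁ := by
    rw [Polynomial.X_dvd_iff, Polynomial.coeff_zero_eq_eval_zero]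
    simp [hw1, e00, e0l, hz0]
  obtain ⟨B, hB⟩ : (X - C 1) ∣ w₂ := by
    rw [Polynomial.dvd_iff_isRoot]
    simp [Polynomial.IsRoot, hw2, el0, ell, hzp]
  have hAdeg : A.degree < ((Finset.univ : Finset (Fin (p+1))).card : WithBot ℕ) := by
    rw [hcard]
    by_cases hA0 : A = 0
    · simp [hA0]
    · rw [← Polynomial.natDegree_lt_iff_degree_lt hA0]
      have h1 : w₁.natDegree ≤ p := Polynomial.natDegree_le_iff_degree_le.mpr hw1deg
      have h2 : w₁.natDegree = 1 + A.natDegree := by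
        rw [hA, Polynomial.natDegree_mul Polynomial.X_ne_zero hA0, Polynomial.natDegree_X]
      omega
  have hBdeg : B.degree < ((Finset.univ : Finset (Fin (p+1))).card : WithBot ℕ) := by
    rw [hcard]
    by_cases hB0 : B = 0
    · simp [hB0]
    · rw [← Polynomial.natDegree_lt_iff_degree_lt hB0]
      have h1 : w₂.natDegree ≤ p := Polynomial.natDegree_le_iff_degree_le.mpr hw2deg
      have h2 : w₂.natDegree = 1 + B.natDegree := by
        rw [hB, Polynomial.natDegree_mul (Polynomial.X_sub_C_ne_zero 1) hB0,
          Polynomial.natDegree_X_sub_C]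
      omega
  have hAinterp := Lagrange.eq_interpolate (f := A) hv hAdeg
  have hBinterp := Lagrange.eq_interpolate (f := B) hv hBdeg
  set ζ : ℝ × ℝ × (Fin (p+1) → ℝ) × (Fin (p+1) → ℝ) :=
    (z0, zp, fun j => A.eval (v j), fun j => B.eval (v j)) with hζ
  have hζ1 : P1 ζ = u₁ := by
    show C z0 * L 0 + C zp * L (Fin.last p) +
      X * Lagrange.interpolate Finset.univ v (fun j => A.eval (v j)) = u₁
    rw [← hAinterp, ← hA, hw1]
    ring
  have hζ2 : P2 ζ = u₂ := by
    show C z0 * L 0 + C zp * L (Fin.last p) +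
      (X - C 1) * Lagrange.interpolate Finset.univ v (fun j => B.eval (v j)) = u₂
    rw [← hBinterp, ← hB, hw2]
    ring
  refine ⟨ζ, (key ζ).mpr ⟨hζ1, hζ2⟩, ?_⟩
  -- uniqueness
  intro c hc
  have hc1 : P1 c = u₁ := ((key c).mp hc).1
  have hc2 : P2 c = u₂ := ((key c).mp hc).2
  -- compare the two representations
  have hP1eq : P1 c = P1 ζ := by rw [hc1, hζ1]
  have hP2eq : P2 c = P2 ζ := by rw [hc2, hζ2]
  have hfst : c.1 = ζ.1 := by
    have := congrArg (Polynomial.eval 0) hP1eq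
    simpa [hP1_def, e00, e0l] using this
  have hsnd : c.2.1 = ζ.2.1 := by
    have := congrArg (Polynomial.eval 1) hP2eq
    simpa [hP2_def, el0, ell] using this
  have ha : c.2.2.1 = ζ.2.2.1 := by
    have hX : X * Lagrange.interpolate Finset.univ v c.2.2.1 =
        X * Lagrange.interpolate Finset.univ v ζ.2.2.1 := by
      have h' := hP1eq
      simp only [hP1_def] at h'
      rw [hfst, hsnd] at h'
      exact add_left_cancel h'
    have hI := mul_left_cancel₀ (Polynomial.X_ne_zero (R := ℝ)) hX
    funext j
    have := congrArg (Polynomial.eval (v j)) hI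
    rwa [Lagrange.eval_interpolate_at_node _ hv (mem_univ j),
      Lagrange.eval_interpolate_at_node _ hv (mem_univ j)] at this
  have hb : c.2.2.2 = ζ.2.2.2 := by
    have hX : (X - C 1) * Lagrange.interpolate Finset.univ v c.2.2.2 =
        (X - C 1) * Lagrange.interpolate Finset.univ v ζ.2.2.2 := by
      have h' := hP2eq
      simp only [hP2_def] at h'
      rw [hfst, hsnd] at h'
      exact add_left_cancel h'
    have hI := mul_left_cancel₀ (Polynomial.X_sub_C_ne_zero (R := ℝ) 1) hX
    funext j
    have := congrArg (Polynomial.eval (v j)) hI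
    rwa [Lagrange.eval_interpolate_at_node _ hv (mem_univ j),
      Lagrange.eval_interpolate_at_node _ hv (mem_univ j)] at this
  exact Prod.ext hfst (Prod.ext hsnd (Prod.ext ha hb))
end

section
/- Consider the Hilbert space H = {v ∈ L^2(a,b) : v restricted to (a,α) is in H^1(a,α), v restricted to (α,b) is in H^1(α,b), v(a) = v(b) = 0}, where a < α < b, equipped with the broken H^1 norm. Let β be measurable with 0 < β_* ≤ β(x) ≤ β* on (a,b), let w ∈ L^∞(a,b) with w ≥ 0, and let λ > 0. Define a(u,v) = ∫_a^b β u' v' dx + ∫_a^b w u v dx + [u]_α [v]_α / λ, where [v]_α = v(α+) - v(α-) denotes the jump of the one-sided traces at α. Then a is a bounded, coercive bilinear form on H, and hence for every f ∈ L^2(a,b) there exists a unique u ∈ H with a(u,v) = ∫_a^b f v dx for all v ∈ H. -/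
open Set MeasureTheory intervalIntegral

/-- Membership in the broken Sobolev space
`H = {v ∈ L² : v ∈ H¹(a,α) ∩ H¹(α,b), v(a) = v(b) = 0}`, encoded by a weak
derivative `v'` that is square-integrable on each piece together with the
fundamental theorem of calculus representations (which build in the boundary
conditions `v(a) = v(b) = 0`). -/
def MemBrokenH10 (a α b : ℝ) (v v' : ℝ → ℝ) : Prop :=
  IntervalIntegrable v' MeasureTheory.volume a α ∧
  IntervalIntegrable v' MeasureTheory.volume α b ∧
  IntervalIntegrable (fun x => (v' x)^2) MeasureTheory.volume a α ∧
  IntervalIntegrable (fun x => (v' x)^2) MeasureTheory.volume α b ∧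
  (∀ x ∈ Ico a α, v x = ∫ t in a..x, v' t) ∧
  (∀ x ∈ Ioc α b, v x = -∫ t in x..b, v' t)

/-- The jump `[v]_α = v(α⁺) - v(α⁻)` of a broken `H¹` function, expressed via its
weak derivative. -/
noncomputable def brokenJump (a α b : ℝ) (v' : ℝ → ℝ) : ℝ :=
  (-∫ t in α..b, v' t) - ∫ t in a..α, v' t

/-- The bilinear form `a(u,v) = ∫ β u'v' + ∫ w u v + [u]_α [v]_α / λ`. -/
noncomputable def brokenForm (a α b lam : ℝ) (β w : ℝ → ℝ)
    (u u' v v' : ℝ → ℝ) : ℝ :=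
  (∫ x in a..b, β x * u' x * v' x) + (∫ x in a..b, w x * u x * v x) +
    brokenJump a α b u' * brokenJump a α b v' / lam

/-- The squared broken `H¹` norm `‖v‖² = ‖v‖²_{L²} + ‖v'‖²_{L²(a,α)} + ‖v'‖²_{L²(α,b)}`. -/
noncomputable def brokenNormSq (a α b : ℝ) (v v' : ℝ → ℝ) : ℝ :=
  (∫ x in a..b, (v x)^2) + (∫ x in a..α, (v' x)^2) + ∫ x in α..b, (v' x)^2

namespace BrokenAux

/-- Cauchy–Schwarz for integrals. -/
lemma cs_abs (μ : Measure ℝ) (f g : ℝ → ℝ) (hf : MemLp f 2 μ) (hg : MemLp g 2 μ) :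
    ∫ x, |f x * g x| ∂μ ≤ Real.sqrt (∫ x, (f x)^2 ∂μ) * Real.sqrt (∫ x, (g x)^2 ∂μ) := by
  have hpq : (2:ℝ).HolderConjugate 2 := by constructor <;> norm_num
  have h2 : ENNReal.ofReal (2:ℝ) = 2 := by simp
  have := MeasureTheory.integral_mul_norm_le_Lp_mul_Lq hpq (h2 ▸ hf) (h2 ▸ hg)
  have e1 : ∀ (h : ℝ → ℝ), (∫ x, ‖h x‖ ^ (2:ℝ) ∂μ) = ∫ x, (h x)^2 ∂μ := by
    intro h
    refine integral_congr_ae (Filter.Eventually.of_forall fun x => ?_)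
    simp only []
    rw [show ‖h x‖ ^ (2:ℝ) = ‖h x‖ ^ ((2:ℕ):ℝ) by norm_num, Real.rpow_natCast]
    simp [sq_abs]
  rw [e1 f, e1 g] at this
  calc ∫ x, |f x * g x| ∂μ = ∫ x, ‖f x‖ * ‖g x‖ ∂μ := by
        refine integral_congr_ae (Filter.Eventually.of_forall fun x => ?_)
        simp [abs_mul]
    _ ≤ _ := by
        refine this.trans_eq ?_
        rw [Real.sqrt_eq_rpow, Real.sqrt_eq_rpow]

/-- The function reconstructed from a broken derivative. -/
noncomputable def UU (a α b : ℝ) (g : ℝ → ℝ) : ℝ → ℝ := fun t =>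
  if t < α then ∫ s in a..t, g s else if α < t then -∫ s in t..b, g s else 0

/-- Derivative-based bilinear form. -/
noncomputable def FF (a α b lam : ℝ) (β w : ℝ → ℝ) (g h : ℝ → ℝ) : ℝ :=
  (∫ x in Ioo a b, β x * g x * h x) +
    (∫ x in Ioo a b, w x * UU a α b g x * UU a α b h x) +
    brokenJump a α b g * brokenJump a α b h / lam

/-- Derivative-based squared norm. -/
noncomputable def NN (a α b : ℝ) (g : ℝ → ℝ) : ℝ :=
  (∫ x in Ioo a b, (UU a α b g x)^2) + ∫ x in Ioo a b, (g x)^2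

section Basic

variable {a α b : ℝ}

lemma restrict_Ioc_eq (c d : ℝ) :
    (volume : Measure ℝ).restrict (Ioc c d) = volume.restrict (Ioo c d) :=
  (Measure.restrict_congr_set Ioo_ae_eq_Ioc).symm

lemma isFiniteIoo : IsFiniteMeasure ((volume : Measure ℝ).restrict (Ioo a b)) := by
  constructor
  rw [Measure.restrict_apply_univ, Real.volume_Ioo]
  exact ENNReal.ofReal_lt_top

/-- Membership of the reconstructed pair. -/
lemma sub1 (h1 : a < α) (h2 : α < b) : Ioc a α ⊆ Ioo a b :=
  fun x hx => ⟨hx.1, lt_of_le_of_lt hx.2 h2⟩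

lemma sub2 (h1 : a < α) (h2 : α < b) : Ioo α b ⊆ Ioo a b :=
  fun x hx => ⟨h1.trans hx.1, hx.2⟩

lemma ii1 (h1 : a < α) (h2 : α < b) {g : ℝ → ℝ}
    (hg : IntegrableOn g (Ioo a b) volume) : IntervalIntegrable g volume a α := by
  rw [intervalIntegrable_iff_integrableOn_Ioc_of_le h1.le]
  exact hg.mono_set (sub1 h1 h2)

lemma ii2 (h1 : a < α) (h2 : α < b) {g : ℝ → ℝ}
    (hg : IntegrableOn g (Ioo a b) volume) : IntervalIntegrable g volume α b := by
  rw [intervalIntegrable_iff_integrableOn_Ioc_of_le h2.le]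
  rw [IntegrableOn, restrict_Ioc_eq]
  exact hg.mono_set (sub2 h1 h2)

lemma memH_of_L2 (h1 : a < α) (h2 : α < b) {g : ℝ → ℝ}
    (hg : MemLp g 2 (volume.restrict (Ioo a b))) :
    MemBrokenH10 a α b (UU a α b g) g := by
  haveI := isFiniteIoo (a := a) (b := b)
  have hInt : IntegrableOn g (Ioo a b) volume := hg.integrable one_le_two
  have hsq : IntegrableOn (fun x => (g x)^2) (Ioo a b) volume := hg.integrable_sq
  refine ⟨ii1 h1 h2 hInt, ii2 h1 h2 hInt, ii1 h1 h2 hsq, ii2 h1 h2 hsq, ?_, ?_⟩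
  · intro x hx
    simp only [UU, if_pos hx.2]
  · intro x hx
    simp only [UU, if_neg (not_lt.2 hx.1.le), if_pos hx.1]

/-- The derivative of a member is in `L²(a,b)`. -/
lemma memℒp_deriv (h1 : a < α) (h2 : α < b) {v v' : ℝ → ℝ}
    (hv : MemBrokenH10 a α b v v') : MemLp v' 2 (volume.restrict (Ioo a b)) := by
  obtain ⟨hi1, hi2, hs1, hs2, -, -⟩ := hv
  have key : ∀ {f : ℝ → ℝ}, IntervalIntegrable f volume a α →
      IntervalIntegrable f volume α b → IntegrableOn f (Ioo a b) volume := by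
    intro f k1 k2
    rw [intervalIntegrable_iff_integrableOn_Ioc_of_le h1.le] at k1
    rw [intervalIntegrable_iff_integrableOn_Ioc_of_le h2.le] at k2
    have := k1.union k2
    rw [Ioc_union_Ioc_eq_Ioc h1.le h2.le] at this
    exact this.mono_set Ioo_subset_Ioc_self
  have h1' := key hi1 hi2
  have h2' := key hs1 hs2
  exact (memLp_two_iff_integrable_sq h1'.aestronglyMeasurable).mpr h2' 

/-- A member agrees a.e. with the reconstruction from its derivative. -/
lemma mem_ae_eq_UU (h1 : a < α) (h2 : α < b) {v v' : ℝ → ℝ}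
    (hv : MemBrokenH10 a α b v v') :
    v =ᵐ[volume.restrict (Ioo a b)] UU a α b v' := by
  obtain ⟨-, -, -, -, hL, hR⟩ := hv
  have hne : ∀ᵐ (t : ℝ) ∂volume, t ≠ α := by
    rw [ae_iff]
    simpa using measure_singleton (α := ℝ) α
  filter_upwards [ae_restrict_of_ae hne, ae_restrict_mem measurableSet_Ioo] with t ht hmem
  rcases lt_or_gt_of_ne ht with h | h
  · rw [hL t ⟨hmem.1.le, h⟩]
    simp only [UU, if_pos h]
  · rw [hR t ⟨h, hmem.2.le⟩]
    simp only [UU, if_neg (not_lt.2 h.le), if_pos h]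

lemma UU_congr (h1 : a < α) (h2 : α < b) {g g₂ : ℝ → ℝ}
    (hg : g =ᵐ[volume.restrict (Ioo a b)] g₂) :
    ∀ t ∈ Ioo a b, UU a α b g t = UU a α b g₂ t := by
  have key : ∀ s : Set ℝ, s ⊆ Ioo a b → (∫ x in s, g x) = ∫ x in s, g₂ x := by
    intro s hs
    have hg' : g =ᵐ[volume.restrict s] g₂ := ae_restrict_of_ae_restrict_of_subset hs hg
    exact integral_congr_ae hg' 
  intro t ht
  unfold UU
  split_ifs with hlt hgt
  · rw [integral_of_le (le_of_lt ht.1), integral_of_le (le_of_lt ht.1)]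
    exact key _ (fun x hx => ⟨hx.1, lt_of_le_of_lt hx.2 (hlt.trans h2)⟩)
  · rw [integral_of_le (le_of_lt ht.2), integral_of_le (le_of_lt ht.2),
      integral_Ioc_eq_integral_Ioo, integral_Ioc_eq_integral_Ioo]
    rw [key _ (fun x hx => ⟨hgt.trans hx.1 |>.trans_le' h1.le, hx.2⟩)]
  · rfl

lemma UU_add (h1 : a < α) (h2 : α < b) {g g₂ : ℝ → ℝ}
    (hg : IntegrableOn g (Ioo a b) volume) (hg₂ : IntegrableOn g₂ (Ioo a b) volume) :
    ∀ t ∈ Ioo a b, UU a α b (fun x => g x + g₂ x) t = UU a α b g t + UU a α b g₂ t := by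
  intro t ht
  unfold UU
  split_ifs with hlt hgt
  · have k1 : IntervalIntegrable g volume a t := by
      rw [intervalIntegrable_iff_integrableOn_Ioc_of_le ht.1.le]
      exact hg.mono_set (fun x hx => ⟨hx.1, lt_of_le_of_lt hx.2 ht.2⟩)
    have k2 : IntervalIntegrable g₂ volume a t := by
      rw [intervalIntegrable_iff_integrableOn_Ioc_of_le ht.1.le]
      exact hg₂.mono_set (fun x hx => ⟨hx.1, lt_of_le_of_lt hx.2 ht.2⟩)
    exact integral_add k1 k2
  · have k1 : IntervalIntegrable g volume t b := by
      rw [intervalIntegrable_iff_integrableOn_Ioc_of_le ht.2.le, IntegrableOn, restrict_Ioc_eq]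
      exact hg.mono_set (fun x hx => ⟨ht.1.trans hx.1, hx.2⟩)
    have k2 : IntervalIntegrable g₂ volume t b := by
      rw [intervalIntegrable_iff_integrableOn_Ioc_of_le ht.2.le, IntegrableOn, restrict_Ioc_eq]
      exact hg₂.mono_set (fun x hx => ⟨ht.1.trans hx.1, hx.2⟩)
    rw [integral_add k1 k2]
    ring
  · ring

lemma UU_smul (h1 : a < α) (h2 : α < b) (c : ℝ) (g : ℝ → ℝ) :
    ∀ t, UU a α b (fun x => c * g x) t = c * UU a α b g t := by
  intro t
  unfold UU
  split_ifs with hlt hgt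
  · exact intervalIntegral.integral_const_mul c g
  · rw [intervalIntegral.integral_const_mul]
    ring
  · ring

lemma jump_congr (h1 : a < α) (h2 : α < b) {g g₂ : ℝ → ℝ}
    (hg : g =ᵐ[volume.restrict (Ioo a b)] g₂) :
    brokenJump a α b g = brokenJump a α b g₂ := by
  have key : ∀ s : Set ℝ, s ⊆ Ioo a b → (∫ x in s, g x) = ∫ x in s, g₂ x := by
    intro s hs
    have hg' : g =ᵐ[volume.restrict s] g₂ := ae_restrict_of_ae_restrict_of_subset hs hg
    exact integral_congr_ae hg' 
  unfold brokenJump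
  rw [integral_of_le h1.le, integral_of_le h1.le, integral_of_le h2.le, integral_of_le h2.le,
    integral_Ioc_eq_integral_Ioo (x := α), integral_Ioc_eq_integral_Ioo (x := α),
    key _ (sub1 h1 h2), key _ (sub2 h1 h2)]

lemma jump_add (h1 : a < α) (h2 : α < b) {g g₂ : ℝ → ℝ}
    (hg : IntegrableOn g (Ioo a b) volume) (hg₂ : IntegrableOn g₂ (Ioo a b) volume) :
    brokenJump a α b (fun x => g x + g₂ x) = brokenJump a α b g + brokenJump a α b g₂ := by
  unfold brokenJump
  rw [integral_add (ii1 h1 h2 hg) (ii1 h1 h2 hg₂),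
    integral_add (ii2 h1 h2 hg) (ii2 h1 h2 hg₂)]
  ring

lemma jump_smul (h1 : a < α) (h2 : α < b) (c : ℝ) (g : ℝ → ℝ) :
    brokenJump a α b (fun x => c * g x) = c * brokenJump a α b g := by
  unfold brokenJump
  rw [intervalIntegral.integral_const_mul, intervalIntegral.integral_const_mul]
  ring

/-- Uniform bound for the reconstruction. -/
lemma UU_bound (h1 : a < α) (h2 : α < b) {g : ℝ → ℝ}
    (hg : IntegrableOn g (Ioo a b) volume) :
    ∀ t ∈ Ioo a b, |UU a α b g t| ≤ ∫ x in Ioo a b, |g x| := by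
  have habs : IntegrableOn (fun x => |g x|) (Ioo a b) volume := hg.abs
  have hmono : ∀ s : Set ℝ, s ⊆ Ioo a b → (∫ x in s, |g x|) ≤ ∫ x in Ioo a b, |g x| := by
    intro s hs
    exact setIntegral_mono_set habs
      (Filter.Eventually.of_forall fun x => abs_nonneg _) (HasSubset.Subset.eventuallyLE hs)
  intro t ht
  unfold UU
  split_ifs with hlt hgt
  · rw [integral_of_le ht.1.le]
    calc |∫ x in Ioc a t, g x| ≤ ∫ x in Ioc a t, |g x| := by
          simpa [Real.norm_eq_abs] using
            norm_integral_le_integral_norm (μ := volume.restrict (Ioc a t)) g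
      _ ≤ _ := hmono _ (fun x hx => ⟨hx.1, lt_of_le_of_lt hx.2 ht.2⟩)
  · rw [abs_neg, integral_of_le ht.2.le, integral_Ioc_eq_integral_Ioo]
    calc |∫ x in Ioo t b, g x| ≤ ∫ x in Ioo t b, |g x| := by
          simpa [Real.norm_eq_abs] using
            norm_integral_le_integral_norm (μ := volume.restrict (Ioo t b)) g
      _ ≤ _ := hmono _ (fun x hx => ⟨ht.1.trans hx.1, hx.2⟩)
  · simpa using setIntegral_nonneg measurableSet_Ioo (fun x _ => abs_nonneg (g x))

lemma absInt_le (h1 : a < α) (h2 : α < b) {g : ℝ → ℝ}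
    (hg : MemLp g 2 (volume.restrict (Ioo a b))) :
    ∫ x in Ioo a b, |g x| ≤
      Real.sqrt (b - a) * Real.sqrt (∫ x in Ioo a b, (g x)^2) := by
  haveI := isFiniteIoo (a := a) (b := b)
  have := cs_abs (volume.restrict (Ioo a b)) g (fun _ => 1) hg (memLp_const 1)
  simp only [mul_one, one_pow] at this
  rw [setIntegral_const, smul_eq_mul, mul_one,
    Real.volume_real_Ioo_of_le (by linarith : a ≤ b)] at this
  exact this.trans_eq (mul_comm _ _)

lemma jump_bound (h1 : a < α) (h2 : α < b) {g : ℝ → ℝ}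
    (hg : MemLp g 2 (volume.restrict (Ioo a b))) :
    |brokenJump a α b g| ≤ 2 * (∫ x in Ioo a b, |g x|) := by
  haveI := isFiniteIoo (a := a) (b := b)
  have hInt : IntegrableOn g (Ioo a b) volume := hg.integrable one_le_two
  have habs : IntegrableOn (fun x => |g x|) (Ioo a b) volume := hInt.abs
  have hmono : ∀ s : Set ℝ, s ⊆ Ioo a b → (∫ x in s, |g x|) ≤ ∫ x in Ioo a b, |g x| := by
    intro s hs
    exact setIntegral_mono_set habs
      (Filter.Eventually.of_forall fun x => abs_nonneg _) (HasSubset.Subset.eventuallyLE hs)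
  have e1 : |∫ t in a..α, g t| ≤ ∫ x in Ioo a b, |g x| := by
    rw [integral_of_le h1.le]
    refine le_trans ?_ (hmono _ (sub1 h1 h2))
    simpa [Real.norm_eq_abs] using
      norm_integral_le_integral_norm (μ := volume.restrict (Ioc a α)) g
  have e2 : |∫ t in α..b, g t| ≤ ∫ x in Ioo a b, |g x| := by
    rw [integral_of_le h2.le, integral_Ioc_eq_integral_Ioo]
    refine le_trans ?_ (hmono _ (sub2 h1 h2))
    simpa [Real.norm_eq_abs] using
      norm_integral_le_integral_norm (μ := volume.restrict (Ioo α b)) g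
  unfold brokenJump
  calc |(-∫ t in α..b, g t) - ∫ t in a..α, g t|
      ≤ |(-∫ t in α..b, g t)| + |∫ t in a..α, g t| := abs_sub _ _
    _ ≤ _ := by rw [abs_neg]; linarith

lemma memℒp_UU (h1 : a < α) (h2 : α < b) {g : ℝ → ℝ}
    (hg : MemLp g 2 (volume.restrict (Ioo a b))) :
    MemLp (UU a α b g) 2 (volume.restrict (Ioo a b)) := by
  haveI := isFiniteIoo (a := a) (b := b)
  have hInt : IntegrableOn g (Ioo a b) volume := hg.integrable one_le_two
  -- measurability on the left piece
  have c1 : ContinuousOn (fun t => ∫ s in a..t, g s) (uIcc a α) :=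
    continuousOn_primitive_interval' (ii1 h1 h2 hInt) left_mem_uIcc
  have a1 : AEStronglyMeasurable (UU a α b g) (volume.restrict (Ioo a α)) := by
    refine ((c1.mono ?_).aestronglyMeasurable measurableSet_Ioo).congr ?_
    · rw [uIcc_of_le h1.le]
      exact Ioo_subset_Icc_self
    · filter_upwards [ae_restrict_mem measurableSet_Ioo] with t ht
      simp only [UU, if_pos ht.2]
  -- measurability on the right piece
  have hi2 : IntegrableOn g (uIcc α b) volume := by
    rw [uIcc_of_le h2.le, IntegrableOn, ← Measure.restrict_congr_set Ioo_ae_eq_Icc]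
    exact hInt.mono_set (sub2 h1 h2)
  have c2 : ContinuousOn (fun t => -∫ s in t..b, g s) (uIcc α b) :=
    (continuousOn_primitive_interval_left hi2).neg
  have a2 : AEStronglyMeasurable (UU a α b g) (volume.restrict (Ioo α b)) := by
    refine ((c2.mono ?_).aestronglyMeasurable measurableSet_Ioo).congr ?_
    · rw [uIcc_of_le h2.le]
      exact Ioo_subset_Icc_self
    · filter_upwards [ae_restrict_mem measurableSet_Ioo] with t ht
      simp only [UU, if_neg (not_lt.2 ht.1.le), if_pos ht.1]
  -- glue
  have hset : (Ioo a α ∪ Ioo α b : Set ℝ) =ᵐ[volume] Ioo a b := by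
    rw [Filter.eventuallyEq_set]
    have hne : ∀ᵐ (t : ℝ) ∂volume, t ≠ α := by
      rw [ae_iff]
      simpa using measure_singleton (α := ℝ) α
    filter_upwards [hne] with t ht
    constructor
    · rintro (h | h)
      · exact ⟨h.1, h.2.trans h2⟩
      · exact ⟨h1.trans h.1, h.2⟩
    · intro h
      rcases lt_or_gt_of_ne ht with hc | hc
      · exact Or.inl ⟨h.1, hc⟩
      · exact Or.inr ⟨hc, h.2⟩
  have hAE : AEStronglyMeasurable (UU a α b g) (volume.restrict (Ioo a b)) := by
    rw [← Measure.restrict_congr_set hset]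
    exact aestronglyMeasurable_union_iff.mpr ⟨a1, a2⟩
  refine MemLp.of_bound hAE (∫ x in Ioo a b, |g x|) ?_
  filter_upwards [ae_restrict_mem measurableSet_Ioo] with t ht
  simpa [Real.norm_eq_abs] using UU_bound h1 h2 hInt t ht

end Basic

section Form

variable {a α b lam βs βt Cw : ℝ} {β w : ℝ → ℝ}

lemma mul_integrable {g h : ℝ → ℝ} {μ : Measure ℝ}
    (hg : MemLp g 2 μ) (hh : MemLp h 2 μ) :
    Integrable (fun x => g x * h x) μ := by
  refine Integrable.mono' ((hg.integrable_sq.add hh.integrable_sq).div_const 2)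
    (hg.aestronglyMeasurable.mul hh.aestronglyMeasurable)
    (Filter.Eventually.of_forall fun x => ?_)
  simp only [Pi.add_apply]
  rw [Real.norm_eq_abs, abs_mul]
  nlinarith [sq_nonneg (|g x| - |h x|), sq_abs (g x), sq_abs (h x), abs_nonneg (g x),
    abs_nonneg (h x)]

lemma memℒp_beta_mul (hβmeas : Measurable β) (hβs : 0 < βs) (hβ : ∀ x, βs ≤ β x ∧ β x ≤ βt)
    {g : ℝ → ℝ} {μ : Measure ℝ} (hg : MemLp g 2 μ) :
    MemLp (fun x => β x * g x) 2 μ := by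
  refine MemLp.of_le_mul hg (hβmeas.aestronglyMeasurable.mul hg.aestronglyMeasurable)
    (c := βt) (Filter.Eventually.of_forall fun x => ?_)
  rw [Real.norm_eq_abs, Real.norm_eq_abs, abs_mul,
    abs_of_nonneg (le_trans hβs.le (hβ x).1)]
  exact mul_le_mul_of_nonneg_right (hβ x).2 (abs_nonneg _)

lemma memℒp_w_UU (h1 : a < α) (h2 : α < b)
    (hwmeas : Measurable w) (hw0 : ∀ x, 0 ≤ w x) (hwb : ∀ x, w x ≤ Cw)
    {g : ℝ → ℝ} (hg : MemLp g 2 (volume.restrict (Ioo a b))) :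
    MemLp (fun x => w x * UU a α b g x) 2 (volume.restrict (Ioo a b)) := by
  haveI := isFiniteIoo (a := a) (b := b)
  have hU := memℒp_UU h1 h2 hg
  refine MemLp.of_bound (hwmeas.aestronglyMeasurable.mul hU.aestronglyMeasurable)
    (Cw * ∫ x in Ioo a b, |g x|) ?_
  have hInt : IntegrableOn g (Ioo a b) volume := hg.integrable one_le_two
  filter_upwards [ae_restrict_mem measurableSet_Ioo] with t ht
  rw [Real.norm_eq_abs, abs_mul, abs_of_nonneg (hw0 t)]
  exact mul_le_mul (hwb t) (UU_bound h1 h2 hInt t ht) (abs_nonneg _)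
    (le_trans (hw0 t) (hwb t))

lemma integrable_beta (hβmeas : Measurable β) (hβs : 0 < βs) (hβ : ∀ x, βs ≤ β x ∧ β x ≤ βt)
    {g h : ℝ → ℝ} {μ : Measure ℝ} (hg : MemLp g 2 μ) (hh : MemLp h 2 μ) :
    Integrable (fun x => β x * g x * h x) μ :=
  mul_integrable (memℒp_beta_mul hβmeas hβs hβ hg) hh

lemma integrable_w_UU (h1 : a < α) (h2 : α < b)
    (hwmeas : Measurable w) (hw0 : ∀ x, 0 ≤ w x) (hwb : ∀ x, w x ≤ Cw)
    {g h : ℝ → ℝ} (hg : MemLp g 2 (volume.restrict (Ioo a b)))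
    (hh : MemLp h 2 (volume.restrict (Ioo a b))) :
    Integrable (fun x => w x * UU a α b g x * UU a α b h x) (volume.restrict (Ioo a b)) :=
  mul_integrable (memℒp_w_UU h1 h2 hwmeas hw0 hwb hg) (memℒp_UU h1 h2 hh)

/-- The broken form of two members equals the derivative-based form. -/
lemma form_eq (h1 : a < α) (h2 : α < b) {u u' v v' : ℝ → ℝ}
    (hu : MemBrokenH10 a α b u u') (hv : MemBrokenH10 a α b v v') :
    brokenForm a α b lam β w u u' v v' = FF a α b lam β w u' v' := by
  have hab : a ≤ b := (h1.trans h2).le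
  unfold brokenForm FF
  congr 1
  congr 1
  · rw [integral_of_le hab, integral_Ioc_eq_integral_Ioo]
  · rw [integral_of_le hab, integral_Ioc_eq_integral_Ioo]
    refine integral_congr_ae ?_
    filter_upwards [mem_ae_eq_UU h1 h2 hu, mem_ae_eq_UU h1 h2 hv] with x e1 e2
    rw [e1, e2]

/-- The broken norm of a member equals the derivative-based norm. -/
lemma normSq_eq (h1 : a < α) (h2 : α < b) {v v' : ℝ → ℝ}
    (hv : MemBrokenH10 a α b v v') :
    brokenNormSq a α b v v' = NN a α b v' := by
  have hab : a ≤ b := (h1.trans h2).le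
  have e1 : (∫ x in a..b, (v x)^2) = ∫ x in Ioo a b, (UU a α b v' x)^2 := by
    rw [integral_of_le hab, integral_Ioc_eq_integral_Ioo]
    refine integral_congr_ae ?_
    filter_upwards [mem_ae_eq_UU h1 h2 hv] with x e
    rw [e]
  have i1 : IntegrableOn (fun x => (v' x)^2) (Ioc a α) volume := by
    rw [← intervalIntegrable_iff_integrableOn_Ioc_of_le h1.le]
    exact hv.2.2.1
  have i2 : IntegrableOn (fun x => (v' x)^2) (Ioc α b) volume := by
    rw [← intervalIntegrable_iff_integrableOn_Ioc_of_le h2.le]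
    exact hv.2.2.2.1
  have e2 : (∫ x in a..α, (v' x)^2) + (∫ x in α..b, (v' x)^2)
      = ∫ x in Ioo a b, (v' x)^2 := by
    rw [integral_of_le h1.le, integral_of_le h2.le,
      ← setIntegral_union (Ioc_disjoint_Ioc_of_le le_rfl) measurableSet_Ioc i1 i2,
      Ioc_union_Ioc_eq_Ioc h1.le h2.le, integral_Ioc_eq_integral_Ioo]
  unfold brokenNormSq NN
  rw [e1, ← e2]
  ring

lemma FF_congr (h1 : a < α) (h2 : α < b) {g g₂ h h₂ : ℝ → ℝ}
    (hg : g =ᵐ[volume.restrict (Ioo a b)] g₂) (hh : h =ᵐ[volume.restrict (Ioo a b)] h₂) :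
    FF a α b lam β w g h = FF a α b lam β w g₂ h₂ := by
  unfold FF
  rw [jump_congr h1 h2 hg, jump_congr h1 h2 hh]
  congr 1
  congr 1
  · refine integral_congr_ae ?_
    filter_upwards [hg, hh] with x e1 e2
    rw [e1, e2]
  · refine integral_congr_ae ?_
    filter_upwards [ae_restrict_mem measurableSet_Ioo] with x hx
    rw [UU_congr h1 h2 hg x hx, UU_congr h1 h2 hh x hx]

lemma FF_symm : FF a α b lam β w g h = FF a α b lam β w h g := by
  unfold FF
  rw [integral_congr_ae (Filter.Eventually.of_forall (fun x => by ring :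
      ∀ x, β x * g x * h x = β x * h x * g x)),
    integral_congr_ae (Filter.Eventually.of_forall (fun x => by ring :
      ∀ x, w x * UU a α b g x * UU a α b h x = w x * UU a α b h x * UU a α b g x))]
  ring

lemma FF_add_left (h1 : a < α) (h2 : α < b)
    (hβmeas : Measurable β) (hβs : 0 < βs) (hβ : ∀ x, βs ≤ β x ∧ β x ≤ βt)
    (hwmeas : Measurable w) (hw0 : ∀ x, 0 ≤ w x) (hwb : ∀ x, w x ≤ Cw)
    {g₁ g₂ h : ℝ → ℝ} (hg₁ : MemLp g₁ 2 (volume.restrict (Ioo a b)))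
    (hg₂ : MemLp g₂ 2 (volume.restrict (Ioo a b)))
    (hh : MemLp h 2 (volume.restrict (Ioo a b))) :
    FF a α b lam β w (fun x => g₁ x + g₂ x) h
      = FF a α b lam β w g₁ h + FF a α b lam β w g₂ h := by
  haveI := isFiniteIoo (a := a) (b := b)
  have hInt₁ : IntegrableOn g₁ (Ioo a b) volume := hg₁.integrable one_le_two
  have hInt₂ : IntegrableOn g₂ (Ioo a b) volume := hg₂.integrable one_le_two
  have e1 : (∫ x in Ioo a b, β x * (g₁ x + g₂ x) * h x)
      = (∫ x in Ioo a b, β x * g₁ x * h x) + ∫ x in Ioo a b, β x * g₂ x * h x := by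
    rw [← integral_add (integrable_beta hβmeas hβs hβ hg₁ hh)
      (integrable_beta hβmeas hβs hβ hg₂ hh)]
    refine integral_congr_ae (Filter.Eventually.of_forall fun x => by ring)
  have e2 : (∫ x in Ioo a b, w x * UU a α b (fun x => g₁ x + g₂ x) x * UU a α b h x)
      = (∫ x in Ioo a b, w x * UU a α b g₁ x * UU a α b h x)
        + ∫ x in Ioo a b, w x * UU a α b g₂ x * UU a α b h x := by
    rw [← integral_add (integrable_w_UU h1 h2 hwmeas hw0 hwb hg₁ hh)
      (integrable_w_UU h1 h2 hwmeas hw0 hwb hg₂ hh)]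
    refine integral_congr_ae ?_
    filter_upwards [ae_restrict_mem measurableSet_Ioo] with x hx
    rw [UU_add h1 h2 hInt₁ hInt₂ x hx]
    ring
  unfold FF
  rw [e1, e2, jump_add h1 h2 hInt₁ hInt₂]
  ring

lemma FF_smul_left (h1 : a < α) (h2 : α < b) (c : ℝ) {g h : ℝ → ℝ} :
    FF a α b lam β w (fun x => c * g x) h = c * FF a α b lam β w g h := by
  have e1 : (∫ x in Ioo a b, β x * (c * g x) * h x)
      = c * ∫ x in Ioo a b, β x * g x * h x := by
    rw [← MeasureTheory.integral_const_mul]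
    refine integral_congr_ae (Filter.Eventually.of_forall fun x => by ring)
  have e2 : (∫ x in Ioo a b, w x * UU a α b (fun x => c * g x) x * UU a α b h x)
      = c * ∫ x in Ioo a b, w x * UU a α b g x * UU a α b h x := by
    rw [← MeasureTheory.integral_const_mul]
    refine integral_congr_ae (Filter.Eventually.of_forall fun x => ?_)
    simp only []
    rw [UU_smul h1 h2 c g x]
    ring
  unfold FF
  rw [e1, e2, jump_smul h1 h2]
  ring

lemma FF_sub_left (h1 : a < α) (h2 : α < b)
    (hβmeas : Measurable β) (hβs : 0 < βs) (hβ : ∀ x, βs ≤ β x ∧ β x ≤ βt)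
    (hwmeas : Measurable w) (hw0 : ∀ x, 0 ≤ w x) (hwb : ∀ x, w x ≤ Cw)
    {g₁ g₂ h : ℝ → ℝ} (hg₁ : MemLp g₁ 2 (volume.restrict (Ioo a b)))
    (hg₂ : MemLp g₂ 2 (volume.restrict (Ioo a b)))
    (hh : MemLp h 2 (volume.restrict (Ioo a b))) :
    FF a α b lam β w (fun x => g₁ x - g₂ x) h
      = FF a α b lam β w g₁ h - FF a α b lam β w g₂ h := by
  have h5 : (fun x => g₁ x - g₂ x) = (fun x => g₁ x + (-1) * g₂ x) := by
    funext x; ring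
  rw [h5, FF_add_left h1 h2 hβmeas hβs hβ hwmeas hw0 hwb hg₁ (hg₂.const_mul (-1)) hh,
    FF_smul_left h1 h2 (-1)]
  ring

end Form

section Bounds

variable {a α b lam βs βt Cw : ℝ} {β w : ℝ → ℝ}

lemma intsq_nonneg (g : ℝ → ℝ) (μ : Measure ℝ) : 0 ≤ ∫ x, (g x)^2 ∂μ :=
  integral_nonneg fun x => sq_nonneg (g x)

lemma FF_bound (h1 : a < α) (h2 : α < b)
    (hβmeas : Measurable β) (hβs : 0 < βs) (hβ : ∀ x, βs ≤ β x ∧ β x ≤ βt)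
    (hwmeas : Measurable w) (hw0 : ∀ x, 0 ≤ w x) (hwb : ∀ x, w x ≤ Cw)
    (hlam : 0 < lam)
    {g h : ℝ → ℝ} (hg : MemLp g 2 (volume.restrict (Ioo a b)))
    (hh : MemLp h 2 (volume.restrict (Ioo a b))) :
    |FF a α b lam β w g h| ≤ (βt + Cw * (b-a)^2 + 4*(b-a)/lam) *
      Real.sqrt (∫ x in Ioo a b, (g x)^2) * Real.sqrt (∫ x in Ioo a b, (h x)^2) := by
  haveI := isFiniteIoo (a := a) (b := b)
  have hba0 : (0:ℝ) ≤ b - a := by linarith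
  have hβt : 0 ≤ βt := le_trans (le_trans hβs.le (hβ 0).1) (hβ 0).2
  have hCw : 0 ≤ Cw := le_trans (hw0 0) (hwb 0)
  set G := Real.sqrt (∫ x in Ioo a b, (g x)^2) with hGdef
  set H := Real.sqrt (∫ x in Ioo a b, (h x)^2) with hHdef
  set Kg := ∫ x in Ioo a b, |g x| with hKgdef
  set Kh := ∫ x in Ioo a b, |h x| with hKhdef
  have hG : 0 ≤ G := Real.sqrt_nonneg _
  have hH : 0 ≤ H := Real.sqrt_nonneg _
  have hKg0 : 0 ≤ Kg := integral_nonneg fun x => abs_nonneg _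
  have hKh0 : 0 ≤ Kh := integral_nonneg fun x => abs_nonneg _
  have hKgle : Kg ≤ Real.sqrt (b-a) * G := absInt_le h1 h2 hg
  have hKhle : Kh ≤ Real.sqrt (b-a) * H := absInt_le h1 h2 hh
  have hs : Real.sqrt (b-a) * Real.sqrt (b-a) = b - a := Real.mul_self_sqrt hba0
  have hKK : Kg * Kh ≤ (b-a) * (G*H) := by
    have h5 := mul_le_mul hKgle hKhle hKh0 (by positivity)
    calc Kg * Kh ≤ (Real.sqrt (b-a)*G)*(Real.sqrt (b-a)*H) := h5
      _ = (Real.sqrt (b-a) * Real.sqrt (b-a)) * (G*H) := by ring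
      _ = (b-a)*(G*H) := by rw [hs]
  have hcs : ∫ x in Ioo a b, |g x * h x| ≤ G * H := cs_abs _ g h hg hh
  have hIg : IntegrableOn g (Ioo a b) volume := hg.integrable one_le_two
  have hIh : IntegrableOn h (Ioo a b) volume := hh.integrable one_le_two
  have t1 : |∫ x in Ioo a b, β x * g x * h x| ≤ βt * (G * H) := by
    have step : |∫ x in Ioo a b, β x * g x * h x|
        ≤ ∫ x in Ioo a b, βt * |g x * h x| := by
      rw [← Real.norm_eq_abs]
      refine (MeasureTheory.norm_integral_le_integral_norm _).trans ?_
      refine integral_mono_of_nonneg (Filter.Eventually.of_forall fun x => norm_nonneg _)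
        ((mul_integrable hg hh).abs.const_mul βt)
        (Filter.Eventually.of_forall fun x => ?_)
      simp only [Real.norm_eq_abs]
      rw [mul_assoc, abs_mul, abs_of_nonneg (le_trans hβs.le (hβ x).1)]
      exact mul_le_mul_of_nonneg_right (hβ x).2 (abs_nonneg _)
    rw [MeasureTheory.integral_const_mul] at step
    exact step.trans (mul_le_mul_of_nonneg_left hcs hβt)
  have t2 : |∫ x in Ioo a b, w x * UU a α b g x * UU a α b h x|
      ≤ Cw * (b-a)^2 * (G * H) := by
    have step : |∫ x in Ioo a b, w x * UU a α b g x * UU a α b h x|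
        ≤ ∫ _x in Ioo a b, Cw * Kg * Kh := by
      rw [← Real.norm_eq_abs]
      refine (MeasureTheory.norm_integral_le_integral_norm _).trans ?_
      refine integral_mono_of_nonneg (Filter.Eventually.of_forall fun x => norm_nonneg _)
        (integrable_const _) ?_
      filter_upwards [ae_restrict_mem measurableSet_Ioo] with x hx
      simp only [Real.norm_eq_abs]
      rw [abs_mul, abs_mul, abs_of_nonneg (hw0 x)]
      exact mul_le_mul (mul_le_mul (hwb x) (UU_bound h1 h2 hIg x hx) (abs_nonneg _) hCw)
        (UU_bound h1 h2 hIh x hx) (abs_nonneg _) (mul_nonneg hCw hKg0)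
    rw [setIntegral_const, smul_eq_mul, Real.volume_real_Ioo_of_le (by linarith : a ≤ b)] at step
    refine step.trans ?_
    nlinarith [mul_le_mul_of_nonneg_left hKK (mul_nonneg hCw hba0)]
  have t3 : |brokenJump a α b g * brokenJump a α b h / lam|
      ≤ 4*(b-a)/lam * (G * H) := by
    rw [abs_div, abs_of_pos hlam, abs_mul]
    rw [div_le_iff₀ hlam]
    have hJg := jump_bound h1 h2 hg
    have hJh := jump_bound h1 h2 hh
    have h6 : |brokenJump a α b g| * |brokenJump a α b h| ≤ (2*Kg) * (2*Kh) :=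
      mul_le_mul hJg hJh (abs_nonneg _) (by linarith [abs_nonneg (brokenJump a α b g)])
    refine h6.trans ?_
    have : (2*Kg)*(2*Kh) = 4*(Kg*Kh) := by ring
    rw [this]
    calc 4*(Kg*Kh) ≤ 4*((b-a)*(G*H)) := by linarith
      _ = 4*(b-a)/lam * (G*H) * lam := by field_simp
  calc |FF a α b lam β w g h|
      ≤ |∫ x in Ioo a b, β x * g x * h x|
        + |∫ x in Ioo a b, w x * UU a α b g x * UU a α b h x|
        + |brokenJump a α b g * brokenJump a α b h / lam| := by
        have hA := abs_add_le ((∫ x in Ioo a b, β x * g x * h x)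
          + ∫ x in Ioo a b, w x * UU a α b g x * UU a α b h x)
          (brokenJump a α b g * brokenJump a α b h / lam)
        have hB := abs_add_le (∫ x in Ioo a b, β x * g x * h x)
          (∫ x in Ioo a b, w x * UU a α b g x * UU a α b h x)
        unfold FF
        linarith
    _ ≤ βt * (G*H) + Cw * (b-a)^2 * (G*H) + 4*(b-a)/lam * (G*H) := by linarith
    _ = (βt + Cw * (b-a)^2 + 4*(b-a)/lam) * G * H := by ring

lemma FF_coer (h1 : a < α) (h2 : α < b)
    (hβmeas : Measurable β) (hβs : 0 < βs) (hβ : ∀ x, βs ≤ β x ∧ β x ≤ βt)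
    (hw0 : ∀ x, 0 ≤ w x) (hlam : 0 < lam)
    {g : ℝ → ℝ} (hg : MemLp g 2 (volume.restrict (Ioo a b))) :
    βs * (∫ x in Ioo a b, (g x)^2) ≤ FF a α b lam β w g g := by
  have t1 : βs * (∫ x in Ioo a b, (g x)^2) ≤ ∫ x in Ioo a b, β x * g x * g x := by
    rw [← MeasureTheory.integral_const_mul]
    refine integral_mono_of_nonneg
      (Filter.Eventually.of_forall fun x => by positivity)
      (integrable_beta hβmeas hβs hβ hg hg)
      (Filter.Eventually.of_forall fun x => ?_)
    simp only []
    have : βs * (g x)^2 ≤ β x * (g x)^2 :=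
      mul_le_mul_of_nonneg_right (hβ x).1 (sq_nonneg _)
    nlinarith [this]
  have t2 : 0 ≤ ∫ x in Ioo a b, w x * UU a α b g x * UU a α b g x :=
    setIntegral_nonneg measurableSet_Ioo fun x _ => by
      rw [mul_assoc]
      exact mul_nonneg (hw0 x) (mul_self_nonneg _)
  have t3 : 0 ≤ brokenJump a α b g * brokenJump a α b g / lam :=
    div_nonneg (mul_self_nonneg _) hlam.le
  unfold FF
  linarith

lemma NN_le (h1 : a < α) (h2 : α < b)
    {g : ℝ → ℝ} (hg : MemLp g 2 (volume.restrict (Ioo a b))) :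
    NN a α b g ≤ (1 + (b-a)^2) * ∫ x in Ioo a b, (g x)^2 := by
  haveI := isFiniteIoo (a := a) (b := b)
  have hba0 : (0:ℝ) ≤ b - a := by linarith
  set Kg := ∫ x in Ioo a b, |g x| with hKgdef
  have hKg0 : 0 ≤ Kg := integral_nonneg fun x => abs_nonneg _
  have hsq0 : 0 ≤ ∫ x in Ioo a b, (g x)^2 := intsq_nonneg _ _
  have hIg : IntegrableOn g (Ioo a b) volume := hg.integrable one_le_two
  have hKg2 : Kg * Kg ≤ (b-a) * ∫ x in Ioo a b, (g x)^2 := by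
    have hKgle := absInt_le h1 h2 hg
    have h5 := mul_le_mul hKgle hKgle hKg0 (by positivity)
    calc Kg * Kg ≤ (Real.sqrt (b-a) * Real.sqrt (∫ x in Ioo a b, (g x)^2))
          * (Real.sqrt (b-a) * Real.sqrt (∫ x in Ioo a b, (g x)^2)) := h5
      _ = (Real.sqrt (b-a) * Real.sqrt (b-a)) *
          (Real.sqrt (∫ x in Ioo a b, (g x)^2) * Real.sqrt (∫ x in Ioo a b, (g x)^2)) := by
          ring
      _ = (b-a) * ∫ x in Ioo a b, (g x)^2 := by
          rw [Real.mul_self_sqrt hba0, Real.mul_self_sqrt hsq0]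
  have hUU : (∫ x in Ioo a b, (UU a α b g x)^2) ≤ (b-a) * (Kg * Kg) := by
    have step : (∫ x in Ioo a b, (UU a α b g x)^2) ≤ ∫ _x in Ioo a b, Kg * Kg := by
      refine integral_mono_of_nonneg (Filter.Eventually.of_forall fun x => sq_nonneg _)
        (integrable_const _) ?_
      filter_upwards [ae_restrict_mem measurableSet_Ioo] with x hx
      have hb := UU_bound h1 h2 hIg x hx
      nlinarith [abs_nonneg (UU a α b g x), sq_abs (UU a α b g x)]
    rw [setIntegral_const, smul_eq_mul, Real.volume_real_Ioo_of_le (by linarith : a ≤ b)] at step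
    exact step
  unfold NN
  nlinarith [mul_le_mul_of_nonneg_left hKg2 hba0]

end Bounds

end BrokenAux

theorem stmt_9 (a α b lam βs βt : ℝ) (h1 : a < α) (h2 : α < b)
    (β w : ℝ → ℝ) (hβmeas : Measurable β) (hβs : 0 < βs)
    (hβ : ∀ x, βs ≤ β x ∧ β x ≤ βt)
    (hwmeas : Measurable w) (hw0 : ∀ x, 0 ≤ w x)
    (Cw : ℝ) (hwb : ∀ x, w x ≤ Cw)
    (hlam : 0 < lam) :
    -- boundedness of the bilinear form on H
    (∃ M : ℝ, ∀ u u' v v' : ℝ → ℝ, MemBrokenH10 a α b u u' →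
        MemBrokenH10 a α b v v' →
        |brokenForm a α b lam β w u u' v v'| ≤
          M * Real.sqrt (brokenNormSq a α b u u') * Real.sqrt (brokenNormSq a α b v v')) ∧
    -- coercivity of the bilinear form on H
    (∃ c : ℝ, 0 < c ∧ ∀ v v' : ℝ → ℝ, MemBrokenH10 a α b v v' →
        brokenForm a α b lam β w v v' v v' ≥ c * brokenNormSq a α b v v') ∧
    -- existence and uniqueness of the weak solution for every f ∈ L²
    (∀ f : ℝ → ℝ, MemLp f 2 (volume.restrict (Ioo a b)) →
      ∃ u u' : ℝ → ℝ, MemBrokenH10 a α b u u' ∧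
        (∀ v v' : ℝ → ℝ, MemBrokenH10 a α b v v' →
          brokenForm a α b lam β w u u' v v' = ∫ x in a..b, f x * v x) ∧
        ∀ u₂ u₂' : ℝ → ℝ, MemBrokenH10 a α b u₂ u₂' →
          (∀ v v' : ℝ → ℝ, MemBrokenH10 a α b v v' →
            brokenForm a α b lam β w u₂ u₂' v v' = ∫ x in a..b, f x * v x) →
          ∀ x ∈ Icc a b, x ≠ α → u₂ x = u x) := by
  have hba0 : (0:ℝ) ≤ b - a := by linarith
  have hβt : 0 ≤ βt := le_trans (le_trans hβs.le (hβ 0).1) (hβ 0).2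
  have hCw : 0 ≤ Cw := le_trans (hw0 0) (hwb 0)
  set M : ℝ := βt + Cw * (b-a)^2 + 4*(b-a)/lam with hMdef
  have hM0 : 0 ≤ M := by
    have : 0 ≤ 4*(b-a)/lam := by positivity
    have : 0 ≤ Cw * (b-a)^2 := by positivity
    simp only [hMdef]
    positivity
  -- Part 1 : boundedness
  have part1 : ∀ u u' v v' : ℝ → ℝ, MemBrokenH10 a α b u u' →
      MemBrokenH10 a α b v v' →
      |brokenForm a α b lam β w u u' v v'| ≤
        M * Real.sqrt (brokenNormSq a α b u u') * Real.sqrt (brokenNormSq a α b v v') := by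
    intro u u' v v' hu hv
    have hgu := BrokenAux.memℒp_deriv h1 h2 hu
    have hgv := BrokenAux.memℒp_deriv h1 h2 hv
    rw [BrokenAux.form_eq h1 h2 hu hv, BrokenAux.normSq_eq h1 h2 hu,
      BrokenAux.normSq_eq h1 h2 hv]
    refine (BrokenAux.FF_bound h1 h2 hβmeas hβs hβ hwmeas hw0 hwb hlam hgu hgv).trans ?_
    have key : ∀ g : ℝ → ℝ, Real.sqrt (∫ x in Ioo a b, (g x)^2)
        ≤ Real.sqrt (BrokenAux.NN a α b g) := by
      intro g
      refine Real.sqrt_le_sqrt ?_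
      unfold BrokenAux.NN
      have := BrokenAux.intsq_nonneg (BrokenAux.UU a α b g) (volume.restrict (Ioo a b))
      linarith
    have k1 := key u'
    have k2 := key v'
    have s1 : (0:ℝ) ≤ Real.sqrt (∫ x in Ioo a b, (v' x)^2) := Real.sqrt_nonneg _
    have s2 : (0:ℝ) ≤ Real.sqrt (BrokenAux.NN a α b u') := Real.sqrt_nonneg _
    have s3 : (0:ℝ) ≤ Real.sqrt (∫ x in Ioo a b, (u' x)^2) := Real.sqrt_nonneg _
    refine mul_le_mul (mul_le_mul_of_nonneg_left k1 hM0) k2 s1 (by positivity)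
  -- Part 2 : coercivity
  have hc0 : (0:ℝ) < βs / (1 + (b-a)^2) := by positivity
  have part2 : ∀ v v' : ℝ → ℝ, MemBrokenH10 a α b v v' →
      brokenForm a α b lam β w v v' v v' ≥
        (βs / (1 + (b-a)^2)) * brokenNormSq a α b v v' := by
    intro v v' hv
    have hgv := BrokenAux.memℒp_deriv h1 h2 hv
    rw [BrokenAux.form_eq h1 h2 hv hv, BrokenAux.normSq_eq h1 h2 hv]
    have h3 := BrokenAux.FF_coer h1 h2 hβmeas hβs hβ hw0 hlam hgv
    have h4 := BrokenAux.NN_le h1 h2 hgv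
    have hden : (0:ℝ) < 1 + (b-a)^2 := by positivity
    have step : (βs / (1 + (b-a)^2)) * BrokenAux.NN a α b v'
        ≤ (βs / (1 + (b-a)^2)) * ((1 + (b-a)^2) * ∫ x in Ioo a b, (v' x)^2) :=
      mul_le_mul_of_nonneg_left h4 hc0.le
    have heq : (βs / (1 + (b-a)^2)) * ((1 + (b-a)^2) * ∫ x in Ioo a b, (v' x)^2)
        = βs * ∫ x in Ioo a b, (v' x)^2 := by
      field_simp
    rw [heq] at step
    exact le_trans step h3
  refine ⟨⟨M, part1⟩, ⟨βs / (1 + (b-a)^2), hc0, part2⟩, ?_⟩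
  -- Part 3 : existence and uniqueness
  intro f hf
  haveI := BrokenAux.isFiniteIoo (a := a) (b := b)
  have hab : a ≤ b := (h1.trans h2).le
  -- identify the L² norm with the integral of the square
  have normsq : ∀ x : Lp ℝ 2 (volume.restrict (Ioo a b)),
      (∫ t in Ioo a b, ((x : ℝ → ℝ) t)^2) = ‖x‖^2 := by
    intro x
    have h5 := MeasureTheory.L2.inner_def (𝕜 := ℝ) x x
    simp only [RCLike.inner_apply, conj_trivial] at h5
    rw [real_inner_self_eq_norm_sq] at h5
    rw [h5]
    exact integral_congr_ae (Filter.Eventually.of_forall fun t => by simp [pow_two])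
  -- solve the variational problem in L² via Lax–Milgram
  have key : ∃ x₀ : Lp ℝ 2 (volume.restrict (Ioo a b)),
      ∀ y : Lp ℝ 2 (volume.restrict (Ioo a b)),
        BrokenAux.FF a α b lam β w (↑x₀) (↑y)
          = ∫ t in Ioo a b, f t * BrokenAux.UU a α b (↑y) t := by
    -- the bilinear form
    let bB : Lp ℝ 2 (volume.restrict (Ioo a b)) →ₗ[ℝ]
        Lp ℝ 2 (volume.restrict (Ioo a b)) →ₗ[ℝ] ℝ :=
      LinearMap.mk₂ ℝ (fun x y => BrokenAux.FF a α b lam β w (↑x) (↑y))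
        (fun x y z => by
          have e : BrokenAux.FF a α b lam β w (↑(x + y)) (↑z)
              = BrokenAux.FF a α b lam β w (fun t => (x : ℝ → ℝ) t + (y : ℝ → ℝ) t) (↑z) :=
            BrokenAux.FF_congr h1 h2 (Lp.coeFn_add x y) Filter.EventuallyEq.rfl
          rw [e, BrokenAux.FF_add_left h1 h2 hβmeas hβs hβ hwmeas hw0 hwb
            (Lp.memLp x) (Lp.memLp y) (Lp.memLp z)])
        (fun c x y => by
          have e : BrokenAux.FF a α b lam β w (↑(c • x)) (↑y)
              = BrokenAux.FF a α b lam β w (fun t => c * (x : ℝ → ℝ) t) (↑y) :=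
            BrokenAux.FF_congr h1 h2 (Lp.coeFn_smul c x) Filter.EventuallyEq.rfl
          rw [e, BrokenAux.FF_smul_left h1 h2 c]
          rfl)
        (fun x y z => by
          have e0 : ∀ g : ℝ → ℝ, BrokenAux.FF a α b lam β w (↑x) g
              = BrokenAux.FF a α b lam β w g (↑x) := fun g => BrokenAux.FF_symm
          rw [e0, e0, e0]
          have e : BrokenAux.FF a α b lam β w (↑(y + z)) (↑x)
              = BrokenAux.FF a α b lam β w (fun t => (y : ℝ → ℝ) t + (z : ℝ → ℝ) t) (↑x) :=
            BrokenAux.FF_congr h1 h2 (Lp.coeFn_add y z) Filter.EventuallyEq.rfl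
          rw [e, BrokenAux.FF_add_left h1 h2 hβmeas hβs hβ hwmeas hw0 hwb
            (Lp.memLp y) (Lp.memLp z) (Lp.memLp x)])
        (fun c x y => by
          have e0 : ∀ g : ℝ → ℝ, BrokenAux.FF a α b lam β w (↑x) g
              = BrokenAux.FF a α b lam β w g (↑x) := fun g => BrokenAux.FF_symm
          rw [e0, e0]
          have e : BrokenAux.FF a α b lam β w (↑(c • y)) (↑x)
              = BrokenAux.FF a α b lam β w (fun t => c * (y : ℝ → ℝ) t) (↑x) :=
            BrokenAux.FF_congr h1 h2 (Lp.coeFn_smul c y) Filter.EventuallyEq.rfl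
          rw [e, BrokenAux.FF_smul_left h1 h2 c]
          rfl)
    have hBbound : ∀ x y : Lp ℝ 2 (volume.restrict (Ioo a b)),
        ‖bB x y‖ ≤ M * ‖x‖ * ‖y‖ := by
      intro x y
      have h5 := BrokenAux.FF_bound h1 h2 hβmeas hβs hβ hwmeas hw0 hwb hlam
        (Lp.memLp x) (Lp.memLp y)
      rw [normsq x, normsq y, Real.sqrt_sq (norm_nonneg x), Real.sqrt_sq (norm_nonneg y)] at h5
      simpa [bB, Real.norm_eq_abs] using h5
    let B : Lp ℝ 2 (volume.restrict (Ioo a b)) →L[ℝ]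
        Lp ℝ 2 (volume.restrict (Ioo a b)) →L[ℝ] ℝ :=
      LinearMap.mkContinuous₂ bB M hBbound
    have hBapp : ∀ x y, B x y = BrokenAux.FF a α b lam β w (↑x) (↑y) := fun x y => rfl
    have coercive : IsCoercive B := by
      refine ⟨βs, hβs, fun x => ?_⟩
      have h5 := BrokenAux.FF_coer h1 h2 hβmeas hβs hβ hw0 hlam (Lp.memLp x)
      rw [normsq x] at h5
      rw [hBapp]
      nlinarith [h5]
    -- the right-hand side functional
    have hIf : Integrable f (volume.restrict (Ioo a b)) := hf.integrable one_le_two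
    have hKf0 : 0 ≤ ∫ t in Ioo a b, |f t| := integral_nonneg fun t => abs_nonneg _
    have hℓadd : ∀ y z : Lp ℝ 2 (volume.restrict (Ioo a b)),
        (∫ t in Ioo a b, f t * BrokenAux.UU a α b (↑(y + z)) t)
          = (∫ t in Ioo a b, f t * BrokenAux.UU a α b (↑y) t)
            + ∫ t in Ioo a b, f t * BrokenAux.UU a α b (↑z) t := by
      intro y z
      rw [← integral_add (BrokenAux.mul_integrable hf (BrokenAux.memℒp_UU h1 h2 (Lp.memLp y)))
        (BrokenAux.mul_integrable hf (BrokenAux.memℒp_UU h1 h2 (Lp.memLp z)))]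
      refine integral_congr_ae ?_
      filter_upwards [ae_restrict_mem measurableSet_Ioo] with t ht
      rw [BrokenAux.UU_congr h1 h2 (Lp.coeFn_add y z) t ht,
        show ((y : ℝ → ℝ) + (z : ℝ → ℝ)) = (fun x => (y : ℝ → ℝ) x + (z : ℝ → ℝ) x) from rfl,
        BrokenAux.UU_add h1 h2 ((Lp.memLp y).integrable one_le_two)
          ((Lp.memLp z).integrable one_le_two) t ht]
      ring
    have hℓsmul : ∀ (c : ℝ) (y : Lp ℝ 2 (volume.restrict (Ioo a b))),
        (∫ t in Ioo a b, f t * BrokenAux.UU a α b (↑(c • y)) t)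
          = c * ∫ t in Ioo a b, f t * BrokenAux.UU a α b (↑y) t := by
      intro c y
      rw [← MeasureTheory.integral_const_mul]
      refine integral_congr_ae ?_
      filter_upwards [ae_restrict_mem measurableSet_Ioo] with t ht
      rw [BrokenAux.UU_congr h1 h2 (Lp.coeFn_smul c y) t ht,
        show (c • ((y : ℝ → ℝ))) = (fun x => c * (y : ℝ → ℝ) x) from rfl,
        BrokenAux.UU_smul h1 h2 c _ t]
      ring
    let ℓlin : Lp ℝ 2 (volume.restrict (Ioo a b)) →ₗ[ℝ] ℝ :=
      { toFun := fun y => ∫ t in Ioo a b, f t * BrokenAux.UU a α b (↑y) t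
        map_add' := hℓadd
        map_smul' := hℓsmul }
    have hℓbound : ∀ y : Lp ℝ 2 (volume.restrict (Ioo a b)),
        ‖ℓlin y‖ ≤ ((∫ t in Ioo a b, |f t|) * Real.sqrt (b - a)) * ‖y‖ := by
      intro y
      have hUy : ∀ t ∈ Ioo a b, |BrokenAux.UU a α b (↑y) t| ≤ ∫ s in Ioo a b, |(y : ℝ → ℝ) s| :=
        BrokenAux.UU_bound h1 h2 ((Lp.memLp y).integrable one_le_two)
      have hKy0 : 0 ≤ ∫ s in Ioo a b, |(y : ℝ → ℝ) s| := integral_nonneg fun s => abs_nonneg _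
      have hKy : (∫ s in Ioo a b, |(y : ℝ → ℝ) s|) ≤ Real.sqrt (b - a) * ‖y‖ := by
        have h6 := BrokenAux.absInt_le h1 h2 (Lp.memLp y)
        rwa [normsq y, Real.sqrt_sq (norm_nonneg y)] at h6
      have step : ‖ℓlin y‖ ≤ ∫ t in Ioo a b, |f t| * ∫ s in Ioo a b, |(y : ℝ → ℝ) s| := by
        refine (MeasureTheory.norm_integral_le_integral_norm _).trans ?_
        refine integral_mono_of_nonneg (Filter.Eventually.of_forall fun t => norm_nonneg _)
          (hIf.abs.mul_const _) ?_
        filter_upwards [ae_restrict_mem measurableSet_Ioo] with t ht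
        rw [Real.norm_eq_abs, abs_mul]
        exact mul_le_mul_of_nonneg_left (hUy t ht) (abs_nonneg _)
      rw [MeasureTheory.integral_mul_const] at step
      refine step.trans ?_
      calc (∫ t in Ioo a b, |f t|) * ∫ s in Ioo a b, |(y : ℝ → ℝ) s|
          ≤ (∫ t in Ioo a b, |f t|) * (Real.sqrt (b - a) * ‖y‖) :=
            mul_le_mul_of_nonneg_left hKy hKf0
        _ = ((∫ t in Ioo a b, |f t|) * Real.sqrt (b - a)) * ‖y‖ := by ring
    let ℓ : Lp ℝ 2 (volume.restrict (Ioo a b)) →L[ℝ] ℝ :=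
      LinearMap.mkContinuous ℓlin ((∫ t in Ioo a b, |f t|) * Real.sqrt (b - a)) hℓbound
    -- Lax–Milgram
    let x₀ := coercive.continuousLinearEquivOfBilin.symm
      ((InnerProductSpace.toDual ℝ (Lp ℝ 2 (volume.restrict (Ioo a b)))).symm ℓ)
    refine ⟨x₀, fun y => ?_⟩
    have h7 : B x₀ y = ℓ y := by
      rw [← coercive.continuousLinearEquivOfBilin_apply x₀ y]
      rw [show coercive.continuousLinearEquivOfBilin x₀
          = (InnerProductSpace.toDual ℝ (Lp ℝ 2 (volume.restrict (Ioo a b)))).symm ℓ from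
        ContinuousLinearEquiv.apply_symm_apply _ _]
      exact InnerProductSpace.toDual_symm_apply
    rw [← hBapp x₀ y, h7]
    rfl
  obtain ⟨x₀, hx₀⟩ := key
  set u' : ℝ → ℝ := ((x₀ : Lp ℝ 2 (volume.restrict (Ioo a b))) : ℝ → ℝ) with hu'def
  set u : ℝ → ℝ := BrokenAux.UU a α b u' with hudef
  have hmem : MemBrokenH10 a α b u u' := BrokenAux.memH_of_L2 h1 h2 (Lp.memLp x₀)
  have hsol : ∀ v v' : ℝ → ℝ, MemBrokenH10 a α b v v' →
      brokenForm a α b lam β w u u' v v' = ∫ x in a..b, f x * v x := by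
    intro v v' hv
    have hv2 := BrokenAux.memℒp_deriv h1 h2 hv
    have e1 : brokenForm a α b lam β w u u' v v'
        = BrokenAux.FF a α b lam β w u' v' := BrokenAux.form_eq h1 h2 hmem hv
    have e2 : BrokenAux.FF a α b lam β w u' v'
        = BrokenAux.FF a α b lam β w u' (↑(hv2.toLp v')) :=
      BrokenAux.FF_congr h1 h2 Filter.EventuallyEq.rfl (hv2.coeFn_toLp).symm
    have e3 := hx₀ (hv2.toLp v')
    have e4 : (∫ t in Ioo a b, f t * BrokenAux.UU a α b (↑(hv2.toLp v')) t)
        = ∫ t in Ioo a b, f t * v t := by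
      refine integral_congr_ae ?_
      have hae := BrokenAux.mem_ae_eq_UU h1 h2 hv
      filter_upwards [ae_restrict_mem measurableSet_Ioo, hae] with t ht he
      rw [BrokenAux.UU_congr h1 h2 hv2.coeFn_toLp t ht, ← he]
    have e5 : (∫ x in a..b, f x * v x) = ∫ t in Ioo a b, f t * v t := by
      rw [integral_of_le hab, integral_Ioc_eq_integral_Ioo]
    rw [e1, e2, e3, e4, e5]
  refine ⟨u, u', hmem, hsol, ?_⟩
  -- uniqueness
  intro u₂ u₂' hu₂ hsol₂
  set d : ℝ → ℝ := fun t => u₂ t - u t with hddef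
  set d' : ℝ → ℝ := fun t => u₂' t - u' t with hd'def
  have hd'2 : MemLp d' 2 (volume.restrict (Ioo a b)) :=
    (BrokenAux.memℒp_deriv h1 h2 hu₂).sub (BrokenAux.memℒp_deriv h1 h2 hmem)
  have hdmem : MemBrokenH10 a α b d d' := by
    refine ⟨hu₂.1.sub hmem.1, hu₂.2.1.sub hmem.2.1,
      BrokenAux.ii1 h1 h2 hd'2.integrable_sq, BrokenAux.ii2 h1 h2 hd'2.integrable_sq, ?_, ?_⟩
    · intro x hx
      have hx1 : IntervalIntegrable u₂' volume a x := by
        rw [intervalIntegrable_iff_integrableOn_Ioc_of_le hx.1]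
        exact ((intervalIntegrable_iff_integrableOn_Ioc_of_le h1.le).1 hu₂.1).mono_set
          (Ioc_subset_Ioc_right hx.2.le)
      have hx2 : IntervalIntegrable u' volume a x := by
        rw [intervalIntegrable_iff_integrableOn_Ioc_of_le hx.1]
        exact ((intervalIntegrable_iff_integrableOn_Ioc_of_le h1.le).1 hmem.1).mono_set
          (Ioc_subset_Ioc_right hx.2.le)
      simp only [hddef, hd'def]
      rw [hu₂.2.2.2.2.1 x hx, hmem.2.2.2.2.1 x hx, ← integral_sub hx1 hx2]
    · intro x hx
      have hx1 : IntervalIntegrable u₂' volume x b := by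
        rw [intervalIntegrable_iff_integrableOn_Ioc_of_le hx.2]
        exact ((intervalIntegrable_iff_integrableOn_Ioc_of_le h2.le).1 hu₂.2.1).mono_set
          (Ioc_subset_Ioc_left hx.1.le)
      have hx2 : IntervalIntegrable u' volume x b := by
        rw [intervalIntegrable_iff_integrableOn_Ioc_of_le hx.2]
        exact ((intervalIntegrable_iff_integrableOn_Ioc_of_le h2.le).1 hmem.2.1).mono_set
          (Ioc_subset_Ioc_left hx.1.le)
      simp only [hddef, hd'def]
      rw [hu₂.2.2.2.2.2 x hx, hmem.2.2.2.2.2 x hx,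
        show (-∫ t in x..b, u₂' t) - -∫ t in x..b, u' t
          = -((∫ t in x..b, u₂' t) - ∫ t in x..b, u' t) from by ring,
        ← integral_sub hx1 hx2]
  -- the difference solves the homogeneous problem
  have hzero : brokenForm a α b lam β w d d' d d' = 0 := by
    have e1 : brokenForm a α b lam β w d d' d d'
        = BrokenAux.FF a α b lam β w d' d' := BrokenAux.form_eq h1 h2 hdmem hdmem
    have e2 : BrokenAux.FF a α b lam β w d' d'
        = BrokenAux.FF a α b lam β w u₂' d' - BrokenAux.FF a α b lam β w u' d' :=
      BrokenAux.FF_sub_left h1 h2 hβmeas hβs hβ hwmeas hw0 hwb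
        (BrokenAux.memℒp_deriv h1 h2 hu₂) (BrokenAux.memℒp_deriv h1 h2 hmem) hd'2
    have e3 : BrokenAux.FF a α b lam β w u₂' d'
        = brokenForm a α b lam β w u₂ u₂' d d' := (BrokenAux.form_eq h1 h2 hu₂ hdmem).symm
    have e4 : BrokenAux.FF a α b lam β w u' d'
        = brokenForm a α b lam β w u u' d d' := (BrokenAux.form_eq h1 h2 hmem hdmem).symm
    rw [e1, e2, e3, e4, hsol₂ d d' hdmem, hsol d d' hdmem]
    ring
  have hcoerd := part2 d d' hdmem
  rw [hzero] at hcoerd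
  have hNle : brokenNormSq a α b d d' ≤ 0 := by nlinarith [hcoerd, hc0]
  have n1 : 0 ≤ ∫ x in a..b, (d x)^2 :=
    intervalIntegral.integral_nonneg hab fun t _ => sq_nonneg _
  have n2 : 0 ≤ ∫ x in a..α, (d' x)^2 :=
    intervalIntegral.integral_nonneg h1.le fun t _ => sq_nonneg _
  have n3 : 0 ≤ ∫ x in α..b, (d' x)^2 :=
    intervalIntegral.integral_nonneg h2.le fun t _ => sq_nonneg _
  have hN : brokenNormSq a α b d d'
      = (∫ x in a..b, (d x)^2) + (∫ x in a..α, (d' x)^2) + ∫ x in α..b, (d' x)^2 := rfl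
  rw [hN] at hNle
  have hz2 : (∫ x in a..α, (d' x)^2) = 0 := by linarith
  have hz3 : (∫ x in α..b, (d' x)^2) = 0 := by linarith
  -- a.e. vanishing of d' on each piece
  have hae2 : ∀ᵐ t ∂(volume.restrict (Ioc a α)), d' t = 0 := by
    rw [integral_of_le h1.le] at hz2
    have hint : Integrable (fun x => (d' x)^2) (volume.restrict (Ioc a α)) :=
      (intervalIntegrable_iff_integrableOn_Ioc_of_le h1.le).1 (hdmem.2.2.1)
    have := (integral_eq_zero_iff_of_nonneg_ae
      (Filter.Eventually.of_forall fun t => sq_nonneg (d' t)) hint).1 hz2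
    filter_upwards [this] with t ht
    exact pow_eq_zero_iff (n := 2) (by norm_num) |>.1 ht
  have hae3 : ∀ᵐ t ∂(volume.restrict (Ioc α b)), d' t = 0 := by
    rw [integral_of_le h2.le] at hz3
    have hint : Integrable (fun x => (d' x)^2) (volume.restrict (Ioc α b)) :=
      (intervalIntegrable_iff_integrableOn_Ioc_of_le h2.le).1 (hdmem.2.2.2.1)
    have := (integral_eq_zero_iff_of_nonneg_ae
      (Filter.Eventually.of_forall fun t => sq_nonneg (d' t)) hint).1 hz3
    filter_upwards [this] with t ht
    exact pow_eq_zero_iff (n := 2) (by norm_num) |>.1 ht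
  intro x hx hxne
  rcases lt_or_gt_of_ne hxne with hlt | hgt
  · have hxm : x ∈ Ico a α := ⟨hx.1, hlt⟩
    have hfd := hdmem.2.2.2.2.1 x hxm
    have hd0 : (∫ t in a..x, d' t) = 0 := by
      rw [integral_of_le hxm.1]
      rw [integral_eq_zero_of_ae
        (ae_restrict_of_ae_restrict_of_subset (Ioc_subset_Ioc_right hlt.le) hae2)]
    have : d x = 0 := by rw [hfd, hd0]
    simpa [hddef, sub_eq_zero] using this
  · have hxm : x ∈ Ioc α b := ⟨hgt, hx.2⟩
    have hfd := hdmem.2.2.2.2.2 x hxm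
    have hd0 : (∫ t in x..b, d' t) = 0 := by
      rw [integral_of_le hxm.2]
      rw [integral_eq_zero_of_ae
        (ae_restrict_of_ae_restrict_of_subset (Ioc_subset_Ioc_left hgt.le) hae3)]
    have : d x = 0 := by rw [hfd, hd0, neg_zero]
    simpa [hddef, sub_eq_zero] using this
end

section
/- (Piecewise Poincaré inequality with jump control) Let a < α < b and let v ∈ L^2(a,b) be such that v restricted to (a,α) is in H^1(a,α), v restricted to (α,b) is in H^1(α,b), and v(a) = v(b) = 0. Then there exists a constant C depending only on a, b such that ‖v‖_{L^2(a,b)}^2 ≤ C ( ‖v'‖_{L^2(a,α)}^2 + ‖v'‖_{L^2(α,b)}^2 + [v]_α^2 ), where [v]_α = v(α+) - v(α-) is the jump of the one-sided trace values at α. -/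
open Set MeasureTheory intervalIntegral

/-- Cauchy–Schwarz for interval integrals against the constant function 1. -/
lemma cs_interval (c d : ℝ) (hcd : c ≤ d) (f : ℝ → ℝ)
    (hf : IntervalIntegrable f volume c d)
    (hf2 : IntervalIntegrable (fun x => (f x)^2) volume c d) :
    (∫ x in c..d, f x)^2 ≤ (d - c) * ∫ x in c..d, (f x)^2 := by
  rcases eq_or_lt_of_le hcd with rfl | hlt
  · simp
  · set T : ℝ := d - c with hT
    have hT0 : 0 < T := by simp [hT]; linarith
    set I : ℝ := ∫ x in c..d, f x with hI
    have key : 0 ≤ ∫ x in c..d, (f x - I / T)^2 := by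
      apply intervalIntegral.integral_nonneg hcd
      intro x _; positivity
    have expand : (∫ x in c..d, (f x - I / T)^2)
        = (∫ x in c..d, (f x)^2) - 2 * (I / T) * I + (I / T)^2 * T := by
      have h1 : ∀ x, (f x - I / T)^2 = (f x)^2 - (2 * (I / T)) * f x + (I / T)^2 := by
        intro x; ring
      simp_rw [h1]
      rw [intervalIntegral.integral_add, intervalIntegral.integral_sub hf2,
        intervalIntegral.integral_const_mul, intervalIntegral.integral_const]
      · simp only [smul_eq_mul, hT]
        have h : d - c ≠ 0 := by linarith
        field_simp
        rw [← hI]; ring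
      · exact hf.const_mul _
      · exact hf2.sub (hf.const_mul _)
      · exact intervalIntegrable_const
    rw [expand] at key
    have : 2 * (I / T) * I - (I / T)^2 * T = I^2 / T := by
      field_simp; ring
    have h2 : I^2 / T ≤ ∫ x in c..d, (f x)^2 := by linarith
    calc I^2 = T * (I^2 / T) := by field_simp
    _ ≤ T * ∫ x in c..d, (f x)^2 := by
        exact mul_le_mul_of_nonneg_left h2 hT0.le

/-- Ae-equality helper: two functions equal on `Ico c d` are a.e. equal on `Ioc c d`. -/
lemma ae_eq_Ioc_of_eq_Ico {c d : ℝ} (f g : ℝ → ℝ) (h : ∀ x ∈ Ico c d, f x = g x) :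
    f =ᵐ[volume.restrict (Ioc c d)] g := by
  have h1 : ∀ᵐ x ∂(volume.restrict (Ioc c d)), x ∈ Ioc c d :=
    ae_restrict_mem measurableSet_Ioc
  have h2 : ∀ᵐ x ∂(volume.restrict (Ioc c d)), x ≠ d := by
    refine ae_restrict_of_ae ?_
    rw [ae_iff]
    have : {x : ℝ | ¬ x ≠ d} = {d} := by ext x; simp
    rw [this]; exact Real.volume_singleton
  filter_upwards [h1, h2] with x hx hne
  exact h x ⟨hx.1.le, lt_of_le_of_ne hx.2 hne⟩

/-- Piecewise Poincaré inequality with jump control: there is a constant `C`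
depending only on `a, b` such that for every interface point `α ∈ (a,b)` and every
function `v` that is `H¹` on each of `(a,α)`, `(α,b)` (with weak derivative `v'`,
encoded by the fundamental theorem of calculus representations) and vanishes at
`a` and `b`, one has `‖v‖²_{L²} ≤ C (‖v'‖²_{L²(a,α)} + ‖v'‖²_{L²(α,b)} + [v]_α²)`. -/
theorem stmt_10 (a b : ℝ) (hab : a < b) :
    ∃ C : ℝ, ∀ α ∈ Ioo a b, ∀ v v' : ℝ → ℝ,
      IntervalIntegrable v' volume a α →
      IntervalIntegrable v' volume α b →
      IntervalIntegrable (fun x => (v' x)^2) volume a α →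
      IntervalIntegrable (fun x => (v' x)^2) volume α b →
      (∀ x ∈ Ico a α, v x = ∫ t in a..x, v' t) →
      (∀ x ∈ Ioc α b, v x = -∫ t in x..b, v' t) →
      (∫ x in a..b, (v x)^2) ≤
        C * ((∫ x in a..α, (v' x)^2) + (∫ x in α..b, (v' x)^2) +
          ((-∫ t in α..b, v' t) - ∫ t in a..α, v' t)^2) := by
  refine ⟨(b - a)^2, ?_⟩
  rintro α ⟨haα, hαb⟩ v v' hi1 hi2 hs1 hs2 hv1 hv2
  have haα' : a ≤ α := haα.le
  have hαb' : α ≤ b := hαb.le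
  set g₁ : ℝ → ℝ := fun x => ∫ t in a..x, v' t with hg₁
  set g₂ : ℝ → ℝ := fun x => -∫ t in x..b, v' t with hg₂
  -- continuity of the primitives
  have hc₁ : ContinuousOn g₁ (Icc a α) := by
    have := continuousOn_primitive_interval' hi1 (left_mem_uIcc)
    rwa [uIcc_of_le haα'] at this
  have hc₂ : ContinuousOn g₂ (Icc α b) := by
    have h := continuousOn_primitive_interval' hi2 (right_mem_uIcc (a := α) (b := b))
    rw [uIcc_of_le hαb'] at h
    have : g₂ = fun x => ∫ t in b..x, v' t := by
      funext x
      show -∫ t in x..b, v' t = ∫ t in b..x, v' t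
      exact (intervalIntegral.integral_symm x b).symm
    rw [this]
    exact h
  -- a.e. equality of v with the primitives on each subinterval
  have hae₁ : v =ᵐ[volume.restrict (Ioc a α)] g₁ := ae_eq_Ioc_of_eq_Ico v g₁ hv1
  have hae₂ : v =ᵐ[volume.restrict (Ioc α b)] g₂ := by
    have h1 : ∀ᵐ x ∂(volume.restrict (Ioc α b)), x ∈ Ioc α b :=
      ae_restrict_mem measurableSet_Ioc
    filter_upwards [h1] with x hx
    exact hv2 x hx
  -- integrability of v² on each interval
  have hg1sq : IntervalIntegrable (fun x => (g₁ x)^2) volume a α := by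
    apply ContinuousOn.intervalIntegrable
    rw [uIcc_of_le haα']
    exact (hc₁.pow 2)
  have hg2sq : IntervalIntegrable (fun x => (g₂ x)^2) volume α b := by
    apply ContinuousOn.intervalIntegrable
    rw [uIcc_of_le hαb']
    exact (hc₂.pow 2)
  have hvsq1 : IntervalIntegrable (fun x => (v x)^2) volume a α := by
    apply hg1sq.congr_ae
    rw [uIoc_of_le haα']
    filter_upwards [hae₁] with x hx
    simp [hx]
  have hvsq2 : IntervalIntegrable (fun x => (v x)^2) volume α b := by
    apply hg2sq.congr_ae
    rw [uIoc_of_le hαb']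
    filter_upwards [hae₂] with x hx
    simp [hx]
  have hne : ∀ᵐ x : ℝ ∂volume, x ≠ α := by
    rw [ae_iff]
    have : {x : ℝ | ¬ x ≠ α} = {α} := by ext x; simp
    rw [this]; exact Real.volume_singleton
  have hae₁' : ∀ᵐ x : ℝ ∂volume, x ∈ Ioc a α → v x = g₁ x := by
    filter_upwards [hne] with x hx hmem
    exact hv1 x ⟨hmem.1.le, lt_of_le_of_ne hmem.2 hx⟩
  have hae₂' : ∀ᵐ x : ℝ ∂volume, x ∈ Ioc α b → v x = g₂ x :=
    Filter.Eventually.of_forall fun x hx => hv2 x hx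
  -- splitting
  have hsplit : (∫ x in a..b, (v x)^2)
      = (∫ x in a..α, (v x)^2) + ∫ x in α..b, (v x)^2 :=
    (intervalIntegral.integral_add_adjacent_intervals hvsq1 hvsq2).symm
  -- rewrite each piece via the primitives
  have heq₁ : (∫ x in a..α, (v x)^2) = ∫ x in a..α, (g₁ x)^2 := by
    apply intervalIntegral.integral_congr_ae
    rw [uIoc_of_le haα']
    filter_upwards [hae₁'] with x hx hmem
    simp [hx hmem]
  have heq₂ : (∫ x in α..b, (v x)^2) = ∫ x in α..b, (g₂ x)^2 := by
    apply intervalIntegral.integral_congr_ae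
    rw [uIoc_of_le hαb']
    filter_upwards [hae₂'] with x hx hmem
    simp [hx hmem]
  -- nonnegativity of derivative energy integrals
  have hE1 : 0 ≤ ∫ x in a..α, (v' x)^2 :=
    intervalIntegral.integral_nonneg haα' (fun x _ => sq_nonneg _)
  have hE2 : 0 ≤ ∫ x in α..b, (v' x)^2 :=
    intervalIntegral.integral_nonneg hαb' (fun x _ => sq_nonneg _)
  -- pointwise bounds
  have hb₁ : ∀ x ∈ Icc a α, (g₁ x)^2 ≤ (b - a) * ∫ t in a..α, (v' t)^2 := by
    rintro x ⟨hx1, hx2⟩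
    have hsub : uIcc a x ⊆ uIcc a α := uIcc_subset_uIcc left_mem_uIcc
      (by rw [uIcc_of_le haα']; exact ⟨hx1, hx2⟩)
    have := cs_interval a x hx1 v' (hi1.mono_set hsub) (hs1.mono_set hsub)
    have hmono : (∫ t in a..x, (v' t)^2) ≤ ∫ t in a..α, (v' t)^2 := by
      apply intervalIntegral.integral_mono_interval le_rfl hx1 hx2 _ hs1
      filter_upwards with t; exact sq_nonneg _
    calc (g₁ x)^2 ≤ (x - a) * ∫ t in a..x, (v' t)^2 := this
    _ ≤ (b - a) * ∫ t in a..α, (v' t)^2 := by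
        apply mul_le_mul (by linarith) hmono
          (intervalIntegral.integral_nonneg hx1 (fun t _ => sq_nonneg _)) (by linarith)
  have hb₂ : ∀ x ∈ Icc α b, (g₂ x)^2 ≤ (b - a) * ∫ t in α..b, (v' t)^2 := by
    rintro x ⟨hx1, hx2⟩
    have hsub : uIcc x b ⊆ uIcc α b := uIcc_subset_uIcc
      (by rw [uIcc_of_le hαb']; exact ⟨hx1, hx2⟩) right_mem_uIcc
    have hcs := cs_interval x b hx2 v' (hi2.mono_set hsub) (hs2.mono_set hsub)
    have hmono : (∫ t in x..b, (v' t)^2) ≤ ∫ t in α..b, (v' t)^2 := by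
      apply intervalIntegral.integral_mono_interval hx1 hx2 le_rfl _ hs2
      filter_upwards with t; exact sq_nonneg _
    have hg2x : (g₂ x)^2 = (∫ t in x..b, v' t)^2 := by rw [hg₂]; ring
    rw [hg2x]
    calc (∫ t in x..b, v' t)^2 ≤ (b - x) * ∫ t in x..b, (v' t)^2 := hcs
    _ ≤ (b - a) * ∫ t in α..b, (v' t)^2 := by
        apply mul_le_mul (by linarith) hmono
          (intervalIntegral.integral_nonneg hx2 (fun t _ => sq_nonneg _)) (by linarith)
  -- integrate the pointwise bounds
  have hI₁ : (∫ x in a..α, (g₁ x)^2) ≤ (b - a) * ((α - a) * ∫ t in a..α, (v' t)^2) := by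
    have := intervalIntegral.integral_mono_on haα' hg1sq intervalIntegrable_const
      (fun x hx => hb₁ x hx)
    simpa using this
  have hI₂ : (∫ x in α..b, (g₂ x)^2) ≤ (b - a) * ((b - α) * ∫ t in α..b, (v' t)^2) := by
    have := intervalIntegral.integral_mono_on hαb' hg2sq intervalIntegrable_const
      (fun x hx => hb₂ x hx)
    simpa using this
  have hfin₁ : (∫ x in a..α, (v x)^2) ≤ (b - a)^2 * ∫ t in a..α, (v' t)^2 := by
    rw [heq₁]
    calc (∫ x in a..α, (g₁ x)^2) ≤ (b - a) * ((α - a) * ∫ t in a..α, (v' t)^2) := hI₁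
    _ ≤ (b - a) * ((b - a) * ∫ t in a..α, (v' t)^2) := by
        apply mul_le_mul_of_nonneg_left _ (by linarith)
        exact mul_le_mul_of_nonneg_right (by linarith) hE1
    _ = (b - a)^2 * ∫ t in a..α, (v' t)^2 := by ring
  have hfin₂ : (∫ x in α..b, (v x)^2) ≤ (b - a)^2 * ∫ t in α..b, (v' t)^2 := by
    rw [heq₂]
    calc (∫ x in α..b, (g₂ x)^2) ≤ (b - a) * ((b - α) * ∫ t in α..b, (v' t)^2) := hI₂
    _ ≤ (b - a) * ((b - a) * ∫ t in α..b, (v' t)^2) := by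
        apply mul_le_mul_of_nonneg_left _ (by linarith)
        exact mul_le_mul_of_nonneg_right (by linarith) hE2
    _ = (b - a)^2 * ∫ t in α..b, (v' t)^2 := by ring
  have hjump : 0 ≤ ((-∫ t in α..b, v' t) - ∫ t in a..α, v' t)^2 := sq_nonneg _
  have hC : (0:ℝ) ≤ (b - a)^2 := sq_nonneg _
  rw [hsplit]
  nlinarith [mul_nonneg hC hjump]
end
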